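/- For every pointed pair (K,L,⋆) of Kan complexes, the relative homotopy group π_n(K,L,⋆) is a well-defined set for n ≥ 1, a well-defined group for n ≥ 2 (the product being independent of all choices, with identity [⋆], inverses, and associativity), and this group is abelian for n ≥ 3; moreover the construction is functorial in maps of pointed pairs of Kan complexes. -/

import Mathlib

/-- A simplicial set, given combinatorially by sets of `n`-simplices together with
face operators `d i : K_{n+1} → K_n` (`i ≤ n+1`) and degeneracy operators
`s i : K_n → K_{n+1}` (`i ≤ n`) satisfying the simplicial identities.
(The operators are indexed by natural numbers; their values at out-of-range
indices are irrelevant.) -/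
structure SSetC where
  obj : ℕ → Type
  d : (n : ℕ) → ℕ → obj (n + 1) → obj n
  s : (n : ℕ) → ℕ → obj n → obj (n + 1)
  dd : ∀ (n i j : ℕ), i < j → j ≤ n + 2 → ∀ x : obj (n + 2),
      d n i (d (n + 1) j x) = d n (j - 1) (d (n + 1) i x)
  ss : ∀ (n i j : ℕ), i ≤ j → j ≤ n → ∀ x : obj n,
      s (n + 1) i (s n j x) = s (n + 1) (j + 1) (s n i x)
  ds_lt : ∀ (n i j : ℕ), i < j → j ≤ n + 1 → ∀ x : obj (n + 1),
      d (n + 1) i (s (n + 1) j x) = s n (j - 1) (d n i x)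
  ds_self : ∀ (n i : ℕ), i ≤ n → ∀ x : obj n, d n i (s n i x) = x
  ds_succ : ∀ (n i : ℕ), i ≤ n → ∀ x : obj n, d n (i + 1) (s n i x) = x
  ds_gt : ∀ (n i j : ℕ), j + 1 < i → i ≤ n + 2 → ∀ x : obj (n + 1),
      d (n + 1) i (s (n + 1) j x) = s n j (d n (i - 1) x)

namespace SSetC

variable (K : SSetC)

/-- The boundary `∂x = (d_0 x, …, d_{m+1} x)` of an `(m+1)`-simplex. -/
def bdry {m : ℕ} (x : K.obj (m + 1)) : Fin (m + 2) → K.obj m := fun i => K.d m i x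

/-- An `(m+2)`-tuple of `m`-simplices is an `m`-boundary if it is the boundary of
some `(m+1)`-simplex. -/
def IsBoundary {m : ℕ} (c : Fin (m + 2) → K.obj m) : Prop :=
  ∃ x : K.obj (m + 1), K.bdry x = c

/-- An `(m+2)`-tuple of `m`-simplices is compatible (an `m`-cycle) if
`d_i x_j = d_{j-1} x_i` for all `i < j` (a vacuous condition for `m = 0`). -/
def Compat : ∀ {m : ℕ}, (Fin (m + 2) → K.obj m) → Prop
  | 0 => fun _ => True
  | m + 1 => fun c => ∀ i j : Fin (m + 3), (i : ℕ) < (j : ℕ) →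
      K.d m i (c j) = K.d m ((j : ℕ) - 1) (c i)

/-- Compatibility of an `(m,k)`-horn: the entry at position `k` is disregarded. -/
def HornCompat : ∀ {m : ℕ}, ℕ → (Fin (m + 2) → K.obj m) → Prop
  | 0 => fun _ _ => True
  | m + 1 => fun k c => ∀ i j : Fin (m + 3), (i : ℕ) ≠ k → (j : ℕ) ≠ k → (i : ℕ) < (j : ℕ) →
      K.d m i (c j) = K.d m ((j : ℕ) - 1) (c i)

/-- A simplicial set is a Kan complex if every horn has a filling. -/
def IsKan : Prop :=
  ∀ (m k : ℕ), k ≤ m + 1 → ∀ c : Fin (m + 2) → K.obj m, K.HornCompat k c →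
    ∃ x : K.obj (m + 1), ∀ i : Fin (m + 2), (i : ℕ) ≠ k → K.d m i x = c i

/-- The cycle `(s_{n-1} d_0 x, …, s_{n-1} d_{n-1} x, x, y)` used to define homotopy
of `n`-simplices (for `n = 0` it is just `(x, y)`). -/
def homotopyTuple : ∀ {n : ℕ}, K.obj n → K.obj n → Fin (n + 2) → K.obj n
  | 0 => fun x y => ![x, y]
  | n + 1 => fun x y i =>
      if (i : ℕ) < n + 1 then K.s n n (K.d n i x)
      else if (i : ℕ) = n + 1 then x else y

/-- Two `n`-simplices (with the same boundary) are homotopic if the corresponding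
cycle is a boundary. -/
def Homotopic {n : ℕ} (x y : K.obj n) : Prop :=
  K.IsBoundary (K.homotopyTuple x y)

/-- `∂x = ∂y` (a vacuous condition for vertices). -/
def SameBdry : ∀ {n : ℕ}, K.obj n → K.obj n → Prop
  | 0 => fun _ _ => True
  | _ + 1 => fun x y => K.bdry x = K.bdry y

/-- The simplex `⋆_n` of the subcomplex generated by a base point. -/
def basept (b : K.obj 0) : ∀ n : ℕ, K.obj n
  | 0 => b
  | n + 1 => K.s n 0 (basept b n)

lemma basept_succ (b : K.obj 0) (n : ℕ) : K.basept b (n + 1) = K.s n 0 (K.basept b n) := rfl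

lemma s_basept (b : K.obj 0) : ∀ n i : ℕ, i ≤ n → K.s n i (K.basept b n) = K.basept b (n + 1) := by
  intro n
  induction n with
  | zero => intro i hi; interval_cases i; rfl
  | succ n ih =>
    intro i hi
    match i, hi with
    | 0, _ => rfl
    | (i + 1), hi =>
      have h1 : K.basept b (n + 1) = K.s n 0 (K.basept b n) := rfl
      rw [h1, ← K.ss n 0 i (Nat.zero_le _) (by omega), ih i (by omega)]
      exact (K.basept_succ b (n + 1)).symm

lemma d_basept (b : K.obj 0) : ∀ n i : ℕ, i ≤ n + 1 → K.d n i (K.basept b (n + 1)) = K.basept b n := by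
  intro n
  induction n with
  | zero =>
    intro i hi
    interval_cases i
    · exact K.ds_self 0 0 (le_refl 0) b
    · exact K.ds_succ 0 0 (le_refl 0) b
  | succ n ih =>
    intro i hi
    match i, hi with
    | 0, _ => exact K.ds_self (n + 1) 0 (Nat.zero_le _) _
    | 1, _ => exact K.ds_succ (n + 1) 0 (Nat.zero_le _) _
    | (i + 2), hi =>
      have h1 : K.basept b (n + 1 + 1) = K.s (n + 1) 0 (K.basept b (n + 1)) := rfl
      rw [h1, K.ds_gt n (i + 2) 0 (by omega) (by omega)]
      show K.s n 0 (K.d n (i + 1) (K.basept b (n + 1))) = _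
      rw [ih (i + 1) (by omega), K.s_basept b n 0 (Nat.zero_le _)]

/-- An `(m+1)`-simplex is spherical if all of its faces are the base point. -/
def IsSph (b : K.obj 0) {m : ℕ} (x : K.obj (m + 1)) : Prop :=
  ∀ i : Fin (m + 2), K.d m i x = K.basept b m

/-- Sphericality for simplices of arbitrary dimension (vacuous for vertices). -/
def IsSph' (b : K.obj 0) : ∀ {n : ℕ}, K.obj n → Prop
  | 0 => fun _ => True
  | _ + 1 => fun x => K.IsSph b x

lemma basept_isSph (b : K.obj 0) (m : ℕ) : K.IsSph b (K.basept b (m + 1)) :=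
  fun i => K.d_basept b m i (Nat.lt_succ_iff.mp i.isLt)

/-- The cycle `(⋆, …, ⋆, y, z, x)` witnessing `[x][y] = [z]` in `π_{m+1}`. -/
def mulTuple (b : K.obj 0) {m : ℕ} (x y z : K.obj (m + 1)) : Fin (m + 3) → K.obj (m + 1) :=
  fun i =>
    if (i : ℕ) < m then K.basept b (m + 1)
    else if (i : ℕ) = m then y
    else if (i : ℕ) = m + 1 then z
    else x

/-- `z` is a product of `x` and `y` in the sense of the homotopy group `π_{m+1}`. -/
def MulWitness (b : K.obj 0) {m : ℕ} (x y z : K.obj (m + 1)) : Prop :=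
  K.IsBoundary (K.mulTuple b x y z)

/-- Spherical `(m+1)`-simplices: the representatives of `π_{m+1}(K,⋆)`. -/
def Sph (b : K.obj 0) (m : ℕ) := {x : K.obj (m + 1) // K.IsSph b x}

/-- The homotopy group `π_{m+1}(K,⋆)` as a quotient set. -/
def piGrp (b : K.obj 0) (m : ℕ) := Quot (fun x y : K.Sph b m => K.Homotopic x.1 y.1)

/-- The homotopy class of a spherical simplex. -/
def cls (b : K.obj 0) (m : ℕ) (x : K.Sph b m) : K.piGrp b m := Quot.mk _ x

/-- A binary operation on `π_{m+1}(K,⋆)` is induced by horn filling if it sends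
classes of `x` and `y` to the class of any product witness `z`. -/
def MulDescends (b : K.obj 0) (m : ℕ) (mul : K.piGrp b m → K.piGrp b m → K.piGrp b m) : Prop :=
  ∀ x y z : K.Sph b m, K.MulWitness b x.1 y.1 z.1 → mul (K.cls b m x) (K.cls b m y) = K.cls b m z

/-- A Kan complex is minimal if homotopic simplices with equal boundaries are equal. -/
def Minimal : Prop :=
  ∀ (n : ℕ) (x y : K.obj n), K.SameBdry x y → K.Homotopic x y → x = y

end SSetC
namespace SSetC

variable (K : SSetC)

/-- A subcomplex of a simplicial set: a family of subsets closed under the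
face and degeneracy operators. -/
structure Subcomplex (K : SSetC) where
  mem : ∀ n, Set (K.obj n)
  d_mem : ∀ (n i : ℕ), i ≤ n + 1 → ∀ x ∈ mem (n + 1), K.d n i x ∈ mem n
  s_mem : ∀ (n i : ℕ), i ≤ n → ∀ x ∈ mem n, K.s n i x ∈ mem (n + 1)

/-- The subcomplex `L` is itself a Kan complex: every horn with entries in `L`
has a filling lying in `L`. -/
def Subcomplex.IsKan {K : SSetC} (L : Subcomplex K) : Prop :=
  ∀ (m k : ℕ), k ≤ m + 1 → ∀ c : Fin (m + 2) → K.obj m,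
    (∀ i : Fin (m + 2), (i : ℕ) ≠ k → c i ∈ L.mem m) → K.HornCompat k c →
    ∃ x : K.obj (m + 1), x ∈ L.mem (m + 1) ∧ ∀ i : Fin (m + 2), (i : ℕ) ≠ k → K.d m i x = c i

/-- A tuple of `m`-simplices lying in a subcomplex is a boundary in the subcomplex
if it is the boundary of a simplex of the subcomplex. -/
def IsBoundaryIn (L : Subcomplex K) {m : ℕ} (c : Fin (m + 2) → K.obj m) : Prop :=
  ∃ x ∈ L.mem (m + 1), K.bdry x = c

/-- Homotopy of simplices realized inside a subcomplex. -/
def HomotopicIn (L : Subcomplex K) {n : ℕ} (x y : K.obj n) : Prop :=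
  K.IsBoundaryIn L (K.homotopyTuple x y)

/-- The cycle `(h_L, s_m d_1 x, …, s_m d_m x, x, y)` used to define relative homotopy. -/
def relTuple {m : ℕ} (hL x y : K.obj (m + 1)) : Fin (m + 3) → K.obj (m + 1) :=
  fun i =>
    if (i : ℕ) = 0 then hL
    else if (i : ℕ) < m + 1 then K.s m m (K.d m i x)
    else if (i : ℕ) = m + 1 then x
    else y

/-- Two `(m+1)`-simplices are homotopic relative to a subcomplex `L`. -/
def HomotopicRel (L : Subcomplex K) {m : ℕ} (x y : K.obj (m + 1)) : Prop :=
  (∀ i : ℕ, 1 ≤ i → i ≤ m + 1 → K.d m i x = K.d m i y) ∧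
  K.d m 0 x ∈ L.mem m ∧ K.d m 0 y ∈ L.mem m ∧
  ∃ hL ∈ L.mem (m + 1), K.IsBoundary (K.relTuple hL x y)

/-- Representatives of the relative homotopy group `π_{m+1}(K,L,⋆)`:
`∂x = (l, ⋆, …, ⋆)` with `l ∈ L`. -/
def IsRelSph (L : Subcomplex K) (b : K.obj 0) {m : ℕ} (x : K.obj (m + 1)) : Prop :=
  K.d m 0 x ∈ L.mem m ∧ ∀ i : Fin (m + 2), 1 ≤ (i : ℕ) → K.d m i x = K.basept b m

def RelSph (L : Subcomplex K) (b : K.obj 0) (m : ℕ) := {x : K.obj (m + 1) // K.IsRelSph L b x}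

/-- The relative homotopy group `π_{m+1}(K,L,⋆)` as a quotient set. -/
def piRel (L : Subcomplex K) (b : K.obj 0) (m : ℕ) :=
  Quot (fun x y : K.RelSph L b m => K.HomotopicRel L x.1 y.1)

def relCls (L : Subcomplex K) (b : K.obj 0) (m : ℕ) (x : K.RelSph L b m) : K.piRel L b m :=
  Quot.mk _ x

/-- The cycle `(h, ⋆, …, ⋆, y, z, x)` (with `h ∈ L`) witnessing `[x][y] = [z]` in
the relative homotopy group `π_{m+2}(K,L,⋆)`. -/
def relMulTuple (b : K.obj 0) {m : ℕ} (h x y z : K.obj (m + 2)) : Fin (m + 4) → K.obj (m + 2) :=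
  fun i =>
    if (i : ℕ) = 0 then h
    else if (i : ℕ) < m + 1 then K.basept b (m + 2)
    else if (i : ℕ) = m + 1 then y
    else if (i : ℕ) = m + 2 then z
    else x

def RelMulWitness (L : Subcomplex K) (b : K.obj 0) {m : ℕ} (x y z : K.obj (m + 2)) : Prop :=
  ∃ h ∈ L.mem (m + 2), K.IsBoundary (K.relMulTuple b h x y z)

def RelMulDescends (L : Subcomplex K) (b : K.obj 0) (m : ℕ)
    (mul : K.piRel L b (m + 1) → K.piRel L b (m + 1) → K.piRel L b (m + 1)) : Prop :=
  ∀ x y z : K.RelSph L b (m + 1), K.RelMulWitness L b x.1 y.1 z.1 →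
    mul (K.relCls L b (m + 1) x) (K.relCls L b (m + 1) y) = K.relCls L b (m + 1) z

/-- The subcomplex generated by a base point. -/
def ptSub (b : K.obj 0) : Subcomplex K where
  mem n := {x | x = K.basept b n}
  d_mem n i hi x hx := by
    simp only [Set.mem_setOf_eq] at *
    rw [hx]; exact K.d_basept b n i hi
  s_mem n i hi x hx := by
    simp only [Set.mem_setOf_eq] at *
    rw [hx]; exact K.s_basept b n i hi

/-- The full subcomplex. -/
def topSub : Subcomplex K where
  mem _ := Set.univ
  d_mem _ _ _ _ _ := trivial
  s_mem _ _ _ _ _ := trivial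

/-- The empty subcomplex. -/
def botSub : Subcomplex K where
  mem _ := ∅
  d_mem _ _ _ _ h := h.elim
  s_mem _ _ _ _ h := h.elim

/-- A simplicial map between simplicial sets. -/
structure SMap (K L : SSetC) where
  app : ∀ n, K.obj n → L.obj n
  comm_d : ∀ (n i : ℕ), i ≤ n + 1 → ∀ x : K.obj (n + 1), app n (K.d n i x) = L.d n i (app (n + 1) x)
  comm_s : ∀ (n i : ℕ), i ≤ n → ∀ x : K.obj n, app (n + 1) (K.s n i x) = L.s n i (app n x)

/-- The identity simplicial map. -/
def SMap.idMap (K : SSetC) : SMap K K :=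
  ⟨fun _ x => x, fun _ _ _ _ => rfl, fun _ _ _ _ => rfl⟩

/-- Composition of simplicial maps. -/
def SMap.comp {K L M : SSetC} (f : SMap K L) (g : SMap L M) : SMap K M where
  app n x := g.app n (f.app n x)
  comm_d n i hi x := by (try dsimp only); rw [f.comm_d n i hi, g.comm_d n i hi]
  comm_s n i hi x := by (try dsimp only); rw [f.comm_s n i hi, g.comm_s n i hi]

lemma SMap.basept_app {K L : SSetC} (f : SMap K L) (b : K.obj 0) :
    ∀ n, f.app n (K.basept b n) = L.basept (f.app 0 b) n := by
  intro n
  induction n with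
  | zero => rfl
  | succ n ih =>
    have h1 : K.basept b (n + 1) = K.s n 0 (K.basept b n) := rfl
    rw [h1, f.comm_s n 0 (Nat.zero_le _), ih]
    rfl

/-- The product of two simplicial sets. -/
def prodSSet (K L : SSetC) : SSetC where
  obj n := K.obj n × L.obj n
  d n i x := (K.d n i x.1, L.d n i x.2)
  s n i x := (K.s n i x.1, L.s n i x.2)
  dd n i j h1 h2 x := Prod.ext (K.dd n i j h1 h2 x.1) (L.dd n i j h1 h2 x.2)
  ss n i j h1 h2 x := Prod.ext (K.ss n i j h1 h2 x.1) (L.ss n i j h1 h2 x.2)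
  ds_lt n i j h1 h2 x := Prod.ext (K.ds_lt n i j h1 h2 x.1) (L.ds_lt n i j h1 h2 x.2)
  ds_self n i h x := Prod.ext (K.ds_self n i h x.1) (L.ds_self n i h x.2)
  ds_succ n i h x := Prod.ext (K.ds_succ n i h x.1) (L.ds_succ n i h x.2)
  ds_gt n i j h1 h2 x := Prod.ext (K.ds_gt n i j h1 h2 x.1) (L.ds_gt n i j h1 h2 x.2)

/-- The product of a family of simplicial sets. -/
def piSSet {I : Type} (F : I → SSetC) : SSetC where
  obj n := ∀ i, (F i).obj n
  d n j x := fun i => (F i).d n j (x i)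
  s n j x := fun i => (F i).s n j (x i)
  dd n i j h1 h2 x := funext fun a => (F a).dd n i j h1 h2 (x a)
  ss n i j h1 h2 x := funext fun a => (F a).ss n i j h1 h2 (x a)
  ds_lt n i j h1 h2 x := funext fun a => (F a).ds_lt n i j h1 h2 (x a)
  ds_self n i h x := funext fun a => (F a).ds_self n i h (x a)
  ds_succ n i h x := funext fun a => (F a).ds_succ n i h (x a)
  ds_gt n i j h1 h2 x := funext fun a => (F a).ds_gt n i j h1 h2 (x a)

/-- The coproduct (disjoint union) of a family of simplicial sets. -/
def sigmaSSet {I : Type} (F : I → SSetC) : SSetC where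
  obj n := Σ i, (F i).obj n
  d n j x := ⟨x.1, (F x.1).d n j x.2⟩
  s n j x := ⟨x.1, (F x.1).s n j x.2⟩
  dd n i j h1 h2 x := congrArg (Sigma.mk x.1) ((F x.1).dd n i j h1 h2 x.2)
  ss n i j h1 h2 x := congrArg (Sigma.mk x.1) ((F x.1).ss n i j h1 h2 x.2)
  ds_lt n i j h1 h2 x := congrArg (Sigma.mk x.1) ((F x.1).ds_lt n i j h1 h2 x.2)
  ds_self n i h x := congrArg (Sigma.mk x.1) ((F x.1).ds_self n i h x.2)
  ds_succ n i h x := congrArg (Sigma.mk x.1) ((F x.1).ds_succ n i h x.2)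
  ds_gt n i j h1 h2 x := congrArg (Sigma.mk x.1) ((F x.1).ds_gt n i j h1 h2 x.2)

/-- The one-point simplicial set. -/
def ptSSet : SSetC where
  obj _ := PUnit
  d _ _ _ := PUnit.unit
  s _ _ _ := PUnit.unit
  dd _ _ _ _ _ _ := rfl
  ss _ _ _ _ _ _ := rfl
  ds_lt _ _ _ _ _ _ := rfl
  ds_self _ _ _ _ := rfl
  ds_succ _ _ _ _ := rfl
  ds_gt _ _ _ _ _ _ := rfl

/-- The standard `1`-simplex `Δ¹`: an `n`-simplex is a monotone map `[n] → [1]`,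
encoded by the number `k ∈ {0, …, n+1}` of vertices sent to `0`. -/
def deltaOne : SSetC where
  obj n := Fin (n + 2)
  d n i k := ⟨if i < (k : ℕ) then (k : ℕ) - 1 else min (k : ℕ) (n + 1), by
    have := k.isLt; split_ifs <;> omega⟩
  s n i k := ⟨if i < (k : ℕ) then (k : ℕ) + 1 else (k : ℕ), by
    have := k.isLt; split_ifs <;> omega⟩
  dd := by
    intro n i j h1 h2 x
    apply Fin.ext
    have := x.isLt
    simp only []
    split_ifs <;> omega
  ss := by
    intro n i j h1 h2 x
    apply Fin.ext
    have := x.isLt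
    simp only []
    split_ifs <;> omega
  ds_lt := by
    intro n i j h1 h2 x
    apply Fin.ext
    have := x.isLt
    simp only []
    split_ifs <;> omega
  ds_self := by
    intro n i h x
    apply Fin.ext
    have := x.isLt
    simp only []
    split_ifs <;> omega
  ds_succ := by
    intro n i h x
    apply Fin.ext
    have := x.isLt
    simp only []
    split_ifs <;> omega
  ds_gt := by
    intro n i j h1 h2 x
    apply Fin.ext
    have := x.isLt
    simp only []
    split_ifs <;> omega

/-- The `0`-end of `Δ¹` in dimension `n` (all vertices sent to `0`). -/
def vertexZero (n : ℕ) : Fin (n + 2) := ⟨n + 1, by omega⟩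

/-- The `1`-end of `Δ¹` in dimension `n` (all vertices sent to `1`). -/
def vertexOne (n : ℕ) : Fin (n + 2) := ⟨0, by omega⟩

end SSetC
namespace SSetC

section Helpers

variable (K : SSetC) (L : Subcomplex K) (b : K.obj 0)

lemma basept_mem (hb : b ∈ L.mem 0) : ∀ n, K.basept b n ∈ L.mem n
  | 0 => hb
  | n+1 => L.s_mem n 0 (Nat.zero_le _) _ (basept_mem hb n)

lemma bdry_at {r : ℕ} {W : K.obj (r+1)} {c : Fin (r+2) → K.obj r}
    (h : K.bdry W = c) (i : ℕ) (hi : i < r+2) : K.d r i W = c ⟨i, hi⟩ :=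
  congrFun h ⟨i, hi⟩

/-- `d_i (d_0 W) = d_0 (d_{i+1} W)`. -/
lemma dd0 (r i : ℕ) (hi : i + 1 ≤ r + 2) (W : K.obj (r+2)) :
    K.d r i (K.d (r+1) 0 W) = K.d r 0 (K.d (r+1) (i+1) W) := by
  have := K.dd r 0 (i+1) (by omega) hi W
  simpa using this.symm

lemma relSph_d {m : ℕ} {x : K.obj (m+1)} (hx : K.IsRelSph L b x)
    (i : ℕ) (h1 : 1 ≤ i) (h2 : i ≤ m+1) : K.d m i x = K.basept b m :=
  hx.2 ⟨i, by omega⟩ h1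

/-- all faces of `d_0 x` of a relative sphere are the basepoint -/
lemma relSph_d0_faces {m : ℕ} {x : K.obj (m+2)} (hx : K.IsRelSph L b x)
    (i : ℕ) (hi : i ≤ m+1) :
    K.d m i (K.d (m+1) 0 x) = K.basept b m := by
  rw [K.dd0 m i (by omega) x, relSph_d K L b hx (i+1) (by omega) (by omega),
    K.d_basept b m 0 (by omega)]

lemma basept_isRelSph (hb : b ∈ L.mem 0) (n : ℕ) :
    K.IsRelSph L b (K.basept b (n+1)) := by
  refine ⟨?_, fun i hi => K.d_basept b n i (by omega)⟩
  rw [K.d_basept b n 0 (by omega)]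
  exact basept_mem K L b hb n

end Helpers

section GroupLevel

variable (K : SSetC) (L : Subcomplex K) (b : K.obj 0) (m : ℕ)

/-- tuple `(h, ⋆^{m-1}, A, B, C, D)` of `(m+2)`-simplices -/
def exoT (h A B C D : K.obj (m+2)) : Fin (m+4) → K.obj (m+2) :=
  fun i => if (i:ℕ) = 0 then h else if (i:ℕ) < m then K.basept b (m+2)
    else if (i:ℕ) = m then A else if (i:ℕ) = m+1 then B
    else if (i:ℕ) = m+2 then C else D

/-- tuple `(⋆^{m-1}, A', B', C', D')` of `(m+1)`-simplices (shape of `∂` of the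
`h`-entries). -/
def exoS (A' B' C' D' : K.obj (m+1)) : Fin (m+3) → K.obj (m+1) :=
  fun i => if (i:ℕ) + 1 < m then K.basept b (m+1)
    else if (i:ℕ) + 1 = m then A' else if (i:ℕ) = m then B'
    else if (i:ℕ) = m+1 then C' else D'

/-- tuple `(⋆^{m-2}, ℓ₀, ℓ₁, ℓ₂, ℓ₃, ℓ₄)` of `(m+2)`-simplices (shape of `∂H`). -/
def lT (l0 l1 l2 l3 l4 : K.obj (m+2)) : Fin (m+4) → K.obj (m+2) :=
  fun i => if (i:ℕ) + 1 < m then K.basept b (m+2)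
    else if (i:ℕ) + 1 = m then l0 else if (i:ℕ) = m then l1
    else if (i:ℕ) = m+1 then l2 else if (i:ℕ) = m+2 then l3 else l4

/-- tuple `(H, ⋆^{m-1}, Q₀, Q₁, Q₂, Q₃, Q₄)` of `(m+3)`-simplices -/
def bigT (H Q0 Q1 Q2 Q3 Q4 : K.obj (m+3)) : Fin (m+5) → K.obj (m+3) :=
  fun i => if (i:ℕ) = 0 then H else if (i:ℕ) < m then K.basept b (m+3)
    else if (i:ℕ) = m then Q0 else if (i:ℕ) = m+1 then Q1
    else if (i:ℕ) = m+2 then Q2 else if (i:ℕ) = m+3 then Q3 else Q4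

variable {K L b m}

section evalT
variable {h A B C D : K.obj (m+2)} {i : ℕ} {hi : i < m+4}

lemma exoT_0 (e : i = 0) : exoT K b m h A B C D ⟨i, hi⟩ = h := by
  simp only [exoT]; rw [if_pos e]
lemma exoT_low (e1 : 1 ≤ i) (e2 : i < m) :
    exoT K b m h A B C D ⟨i, hi⟩ = K.basept b (m+2) := by
  simp only [exoT]; rw [if_neg (by omega), if_pos e2]
lemma exoT_A (e : i = m) (hm : 1 ≤ m) : exoT K b m h A B C D ⟨i, hi⟩ = A := by
  simp only [exoT]; rw [if_neg (by omega), if_neg (by omega), if_pos e]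
lemma exoT_B (e : i = m+1) : exoT K b m h A B C D ⟨i, hi⟩ = B := by
  simp only [exoT]
  rw [if_neg (by omega), if_neg (by omega), if_neg (by omega), if_pos e]
lemma exoT_C (e : i = m+2) : exoT K b m h A B C D ⟨i, hi⟩ = C := by
  simp only [exoT]
  rw [if_neg (by omega), if_neg (by omega), if_neg (by omega), if_neg (by omega),
    if_pos e]
lemma exoT_D (e : i = m+3) : exoT K b m h A B C D ⟨i, hi⟩ = D := by
  simp only [exoT]
  rw [if_neg (by omega), if_neg (by omega), if_neg (by omega), if_neg (by omega),
    if_neg (by omega)]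
end evalT

section evalS
variable {A' B' C' D' : K.obj (m+1)} {i : ℕ} {hi : i < m+3}

lemma exoS_low (e : i + 1 < m) :
    exoS K b m A' B' C' D' ⟨i, hi⟩ = K.basept b (m+1) := by
  simp only [exoS]; rw [if_pos e]
lemma exoS_A (e : i + 1 = m) : exoS K b m A' B' C' D' ⟨i, hi⟩ = A' := by
  simp only [exoS]; rw [if_neg (by omega), if_pos e]
lemma exoS_B (e : i = m) : exoS K b m A' B' C' D' ⟨i, hi⟩ = B' := by
  simp only [exoS]; rw [if_neg (by omega), if_neg (by omega), if_pos e]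
lemma exoS_C (e : i = m+1) : exoS K b m A' B' C' D' ⟨i, hi⟩ = C' := by
  simp only [exoS]
  rw [if_neg (by omega), if_neg (by omega), if_neg (by omega), if_pos e]
lemma exoS_D (e : i = m+2) : exoS K b m A' B' C' D' ⟨i, hi⟩ = D' := by
  simp only [exoS]
  rw [if_neg (by omega), if_neg (by omega), if_neg (by omega), if_neg (by omega)]
end evalS

section evalL
variable {l0 l1 l2 l3 l4 : K.obj (m+2)} {i : ℕ} {hi : i < m+4}

lemma lT_low (e : i + 1 < m) :
    lT K b m l0 l1 l2 l3 l4 ⟨i, hi⟩ = K.basept b (m+2) := by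
  simp only [lT]; rw [if_pos e]
lemma lT_0 (e : i + 1 = m) : lT K b m l0 l1 l2 l3 l4 ⟨i, hi⟩ = l0 := by
  simp only [lT]; rw [if_neg (by omega), if_pos e]
lemma lT_1 (e : i = m) : lT K b m l0 l1 l2 l3 l4 ⟨i, hi⟩ = l1 := by
  simp only [lT]; rw [if_neg (by omega), if_neg (by omega), if_pos e]
lemma lT_2 (e : i = m+1) : lT K b m l0 l1 l2 l3 l4 ⟨i, hi⟩ = l2 := by
  simp only [lT]
  rw [if_neg (by omega), if_neg (by omega), if_neg (by omega), if_pos e]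
lemma lT_3 (e : i = m+2) : lT K b m l0 l1 l2 l3 l4 ⟨i, hi⟩ = l3 := by
  simp only [lT]
  rw [if_neg (by omega), if_neg (by omega), if_neg (by omega), if_neg (by omega),
    if_pos e]
lemma lT_4 (e : i = m+3) : lT K b m l0 l1 l2 l3 l4 ⟨i, hi⟩ = l4 := by
  simp only [lT]
  rw [if_neg (by omega), if_neg (by omega), if_neg (by omega), if_neg (by omega),
    if_neg (by omega)]
end evalL

section evalBig
variable {H Q0 Q1 Q2 Q3 Q4 : K.obj (m+3)} {i : ℕ} {hi : i < m+5}

lemma bigT_H (e : i = 0) : bigT K b m H Q0 Q1 Q2 Q3 Q4 ⟨i, hi⟩ = H := by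
  simp only [bigT]; rw [if_pos e]
lemma bigT_low (e1 : 1 ≤ i) (e2 : i < m) :
    bigT K b m H Q0 Q1 Q2 Q3 Q4 ⟨i, hi⟩ = K.basept b (m+3) := by
  simp only [bigT]; rw [if_neg (by omega), if_pos e2]
lemma bigT_0 (e : i = m) (hm : 1 ≤ m) : bigT K b m H Q0 Q1 Q2 Q3 Q4 ⟨i, hi⟩ = Q0 := by
  simp only [bigT]; rw [if_neg (by omega), if_neg (by omega), if_pos e]
lemma bigT_1 (e : i = m+1) : bigT K b m H Q0 Q1 Q2 Q3 Q4 ⟨i, hi⟩ = Q1 := by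
  simp only [bigT]
  rw [if_neg (by omega), if_neg (by omega), if_neg (by omega), if_pos e]
lemma bigT_2 (e : i = m+2) : bigT K b m H Q0 Q1 Q2 Q3 Q4 ⟨i, hi⟩ = Q2 := by
  simp only [bigT]
  rw [if_neg (by omega), if_neg (by omega), if_neg (by omega), if_neg (by omega),
    if_pos e]
lemma bigT_3 (e : i = m+3) : bigT K b m H Q0 Q1 Q2 Q3 Q4 ⟨i, hi⟩ = Q3 := by
  simp only [bigT]
  rw [if_neg (by omega), if_neg (by omega), if_neg (by omega), if_neg (by omega),
    if_neg (by omega), if_pos e]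
lemma bigT_4 (e : i = m+4) : bigT K b m H Q0 Q1 Q2 Q3 Q4 ⟨i, hi⟩ = Q4 := by
  simp only [bigT]
  rw [if_neg (by omega), if_neg (by omega), if_neg (by omega), if_neg (by omega),
    if_neg (by omega), if_neg (by omega)]
end evalBig

end GroupLevel

end SSetC
namespace SSetC

section Degen

variable {K : SSetC} {L : Subcomplex K} {b : K.obj 0} {m : ℕ}

/-- faces of a degeneracy of a relative sphere -/
lemma d_s_rel {x : K.obj (m+2)} (hx : K.IsRelSph L b x) (q : ℕ) (hq1 : 1 ≤ q)
    (hq : q ≤ m+2) (i : ℕ) (hi : i ≤ m+3) :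
    K.d (m+2) i (K.s (m+2) q x) =
      if i = 0 then K.s (m+1) (q-1) (K.d (m+1) 0 x)
      else if i < q then K.basept b (m+2)
      else if i ≤ q+1 then x
      else K.basept b (m+2) := by
  rcases Nat.lt_trichotomy i q with h | h | h
  · rw [K.ds_lt (m+1) i q h hq x]
    rcases Nat.eq_zero_or_pos i with h0 | h0
    · subst h0; rw [if_pos rfl]
    · rw [relSph_d K L b hx i h0 (by omega),
        K.s_basept b (m+1) (q-1) (by omega), if_neg (by omega), if_pos h]
  · rw [h, K.ds_self (m+2) q hq x, if_neg (by omega), if_neg (by omega),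
      if_pos (by omega)]
  · rcases Nat.lt_trichotomy i (q+1) with h2 | h2 | h2
    · omega
    · subst h2
      rw [K.ds_succ (m+2) q hq x, if_neg (by omega), if_neg (by omega),
        if_pos (by omega)]
    · rw [K.ds_gt (m+1) i q h2 (by omega) x,
        relSph_d K L b hx (i-1) (by omega) (by omega),
        K.s_basept b (m+1) q (by omega), if_neg (by omega), if_neg (by omega),
        if_neg (by omega)]

lemma bdry_s_top {x : K.obj (m+2)} (hx : K.IsRelSph L b x) :
    K.bdry (K.s (m+2) (m+2) x) =
      exoT K b m (K.s (m+1) (m+1) (K.d (m+1) 0 x))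
        (K.basept b (m+2)) (K.basept b (m+2)) x x := by
  funext j
  obtain ⟨i, hi⟩ := j
  show K.d (m+2) i (K.s (m+2) (m+2) x) = _
  rw [d_s_rel hx (m+2) (by omega) (by omega) i (by omega)]
  rcases Nat.eq_zero_or_pos i with h0 | h0
  · subst h0
    rw [if_pos rfl, (exoT_0 rfl : exoT K b m _ _ _ _ _ ⟨0, hi⟩ = _)]
    rfl
  rcases Nat.lt_trichotomy i m with h | h | h
  · rw [if_neg (by omega), if_pos (by omega), exoT_low h0 h]
  · rw [if_neg (by omega), if_pos (by omega), exoT_A h (by omega)]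
  rcases Nat.lt_trichotomy i (m+2) with h2 | h2 | h2
  · have : i = m+1 := by omega
    subst this
    rw [if_neg (by omega), if_pos (by omega), exoT_B rfl]
  · subst h2
    rw [if_neg (by omega), if_neg (by omega), if_pos (by omega), exoT_C rfl]
  · have : i = m+3 := by omega
    subst this
    rw [if_neg (by omega), if_neg (by omega), if_pos (by omega), exoT_D rfl]

lemma bdry_s_mid {x : K.obj (m+2)} (hx : K.IsRelSph L b x) :
    K.bdry (K.s (m+2) (m+1) x) =
      exoT K b m (K.s (m+1) m (K.d (m+1) 0 x))
        (K.basept b (m+2)) x x (K.basept b (m+2)) := by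
  funext j
  obtain ⟨i, hi⟩ := j
  show K.d (m+2) i (K.s (m+2) (m+1) x) = _
  rw [d_s_rel hx (m+1) (by omega) (by omega) i (by omega)]
  rcases Nat.eq_zero_or_pos i with h0 | h0
  · subst h0
    rw [if_pos rfl, (exoT_0 rfl : exoT K b m _ _ _ _ _ ⟨0, hi⟩ = _)]
    rfl
  rcases Nat.lt_trichotomy i m with h | h | h
  · rw [if_neg (by omega), if_pos (by omega), exoT_low h0 h]
  · subst h
    rw [if_neg (by omega), if_pos (by omega), exoT_A rfl (by omega)]
  rcases Nat.lt_trichotomy i (m+2) with h2 | h2 | h2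
  · have : i = m+1 := by omega
    subst this
    rw [if_neg (by omega), if_neg (by omega), if_pos (by omega), exoT_B rfl]
  · subst h2
    rw [if_neg (by omega), if_neg (by omega), if_pos (by omega), exoT_C rfl]
  · have : i = m+3 := by omega
    subst this
    rw [if_neg (by omega), if_neg (by omega), if_neg (by omega), exoT_D rfl]

lemma bdry_s_low {x : K.obj (m+2)} (hx : K.IsRelSph L b x) (hm : 1 ≤ m) :
    K.bdry (K.s (m+2) m x) =
      exoT K b m (K.s (m+1) (m-1) (K.d (m+1) 0 x))
        x x (K.basept b (m+2)) (K.basept b (m+2)) := by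
  funext j
  obtain ⟨i, hi⟩ := j
  show K.d (m+2) i (K.s (m+2) m x) = _
  rw [d_s_rel hx m hm (by omega) i (by omega)]
  rcases Nat.eq_zero_or_pos i with h0 | h0
  · subst h0
    rw [if_pos rfl, (exoT_0 rfl : exoT K b m _ _ _ _ _ ⟨0, hi⟩ = _)]
  rcases Nat.lt_trichotomy i m with h | h | h
  · rw [if_neg (by omega), if_pos (by omega), exoT_low h0 h]
  · subst h
    rw [if_neg (by omega), if_neg (by omega), if_pos (by omega), exoT_A rfl hm]
  rcases Nat.lt_trichotomy i (m+2) with h2 | h2 | h2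
  · have : i = m+1 := by omega
    subst this
    rw [if_neg (by omega), if_neg (by omega), if_pos (by omega), exoT_B rfl]
  · subst h2
    rw [if_neg (by omega), if_neg (by omega), if_neg (by omega), exoT_C rfl]
  · have : i = m+3 := by omega
    subst this
    rw [if_neg (by omega), if_neg (by omega), if_neg (by omega), exoT_D rfl]

lemma bdry_pt_big :
    K.bdry (K.basept b (m+3)) =
      exoT K b m (K.basept b (m+2)) (K.basept b (m+2)) (K.basept b (m+2))
        (K.basept b (m+2)) (K.basept b (m+2)) := by
  funext j
  obtain ⟨i, hi⟩ := j
  show K.d (m+2) i (K.basept b (m+3)) = _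
  rw [K.d_basept b (m+2) i (by omega)]
  rcases Nat.eq_zero_or_pos i with h0 | h0
  · subst h0; rw [(exoT_0 rfl : exoT K b m _ _ _ _ _ ⟨0, hi⟩ = _)]
  rcases Nat.lt_trichotomy i m with h | h | h
  · rw [exoT_low h0 h]
  · rw [exoT_A h (by omega)]
  rcases Nat.lt_trichotomy i (m+2) with h2 | h2 | h2
  · rw [exoT_B (by omega)]
  · rw [exoT_C h2]
  · rw [exoT_D (by omega)]

/-- boundary of the `L`-entry of an `exoT`-shaped simplex -/
lemma ellFaces {Q : K.obj (m+3)} {l A B C D : K.obj (m+2)}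
    (hQ : K.bdry Q = exoT K b m l A B C D) :
    K.bdry l = exoS K b m (K.d (m+1) 0 A) (K.d (m+1) 0 B) (K.d (m+1) 0 C)
      (K.d (m+1) 0 D) := by
  have h0 : K.d (m+2) 0 Q = l := (bdry_at K hQ 0 (by omega)).trans (exoT_0 rfl)
  funext j
  obtain ⟨i, hi⟩ := j
  show K.d (m+1) i l = _
  rw [← h0, K.dd0 (m+1) i (by omega) Q, bdry_at K hQ (i+1) (by omega)]
  rcases Nat.lt_trichotomy (i+1) m with h | h | h
  · rw [exoT_low (by omega) h, K.d_basept b (m+1) 0 (by omega), exoS_low h]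
  · rw [exoT_A h (by omega), exoS_A h]
  rcases Nat.lt_trichotomy i (m+1) with h2 | h2 | h2
  · have : i = m := by omega
    rw [exoT_B (by omega), exoS_B this]
  · rw [exoT_C (by omega), exoS_C h2]
  · have : i = m+2 := by omega
    rw [exoT_D (by omega), exoS_D this]

end Degen

end SSetC
namespace SSetC

section SmallFill

variable {K : SSetC} {L : Subcomplex K} {b : K.obj 0} {m : ℕ}

/-- Fill a witness-level horn all of whose entries are relative spheres (plus an
`L`-entry in slot `0` constructed internally). Slot `k'` is free. -/
lemma smallFill (hK : K.IsKan) (hL : L.IsKan) (hb : b ∈ L.mem 0)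
    (k' : ℕ) (hk1 : m+1 ≤ k') (hk2 : k' ≤ m+3)
    (a0 b0 c0 d0 : K.obj (m+2)) (ha : K.IsRelSph L b a0) (hb0 : K.IsRelSph L b b0)
    (hc0 : K.IsRelSph L b c0) (hd0 : K.IsRelSph L b d0) :
    ∃ w h W, K.IsRelSph L b w ∧ h ∈ L.mem (m+2) ∧
      K.bdry W = fun p : Fin (m+4) =>
        if (p:ℕ) = k' then w else exoT K b m h a0 b0 c0 d0 p := by
  classical
  set cL : Fin (m+3) → K.obj (m+1) :=
    exoS K b m (K.d (m+1) 0 a0) (K.d (m+1) 0 b0) (K.d (m+1) 0 c0) (K.d (m+1) 0 d0)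
    with hcL
  have cLface : ∀ (p : Fin (m+3)) (i : ℕ), i ≤ m+1 → K.d m i (cL p) = K.basept b m := by
    rintro ⟨p, hp⟩ i hi
    rcases Nat.lt_trichotomy (p+1) m with h | h | h
    · rw [hcL, exoS_low h, K.d_basept b m i (by omega)]
    · rw [hcL, exoS_A h, relSph_d0_faces K L b ha i (by omega)]
    rcases Nat.lt_trichotomy p (m+1) with h2 | h2 | h2
    · rw [hcL, exoS_B (by omega), relSph_d0_faces K L b hb0 i (by omega)]
    · rw [hcL, exoS_C h2, relSph_d0_faces K L b hc0 i (by omega)]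
    · rw [hcL, exoS_D (by omega), relSph_d0_faces K L b hd0 i (by omega)]
  have cLmem : ∀ p : Fin (m+3), cL p ∈ L.mem (m+1) := by
    rintro ⟨p, hp⟩
    rcases Nat.lt_trichotomy (p+1) m with h | h | h
    · rw [hcL, exoS_low h]; exact basept_mem K L b hb (m+1)
    · rw [hcL, exoS_A h]; exact ha.1
    rcases Nat.lt_trichotomy p (m+1) with h2 | h2 | h2
    · rw [hcL, exoS_B (by omega)]; exact hb0.1
    · rw [hcL, exoS_C h2]; exact hc0.1
    · rw [hcL, exoS_D (by omega)]; exact hd0.1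
  have cLcompat : K.HornCompat (m := m+1) (k'-1) cL := by
    intro i j _ _ hij
    rw [cLface j i (by omega), cLface i ((j:ℕ)-1) (by omega)]
  obtain ⟨h, hmem, hfaces⟩ := hL (m+1) (k'-1) (by omega) cL (fun p _ => cLmem p) cLcompat
  -- main horn
  set c : Fin (m+4) → K.obj (m+2) := exoT K b m h a0 b0 c0 d0 with hc
  have cptface : ∀ (p : ℕ) (hp : p < m+4), 1 ≤ p → ∀ i : ℕ, 1 ≤ i → i ≤ m+2 →
      K.d (m+1) i (c ⟨p, hp⟩) = K.basept b (m+1) := by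
    intro p hp hp1 i hi1 hi2
    rcases Nat.lt_trichotomy p m with h' | h' | h'
    · rw [hc, exoT_low hp1 h', K.d_basept b (m+1) i (by omega)]
    · rw [hc, exoT_A h' (by omega), relSph_d K L b ha i hi1 hi2]
    rcases Nat.lt_trichotomy p (m+2) with h2 | h2 | h2
    · rw [hc, exoT_B (by omega), relSph_d K L b hb0 i hi1 hi2]
    · rw [hc, exoT_C h2, relSph_d K L b hc0 i hi1 hi2]
    · rw [hc, exoT_D (by omega), relSph_d K L b hd0 i hi1 hi2]
  have cd0 : ∀ (p : ℕ) (hp : p < m+4), 1 ≤ p → p ≠ k' →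
      K.d (m+1) 0 (c ⟨p, hp⟩) = K.d (m+1) (p-1) h := by
    intro p hp hp1 hpk
    have hf := hfaces ⟨p-1, by omega⟩ (by simp only []; omega)
    rcases Nat.lt_trichotomy p m with h' | h' | h'
    · rw [hc, exoT_low hp1 h', K.d_basept b (m+1) 0 (by omega), hf, hcL,
        exoS_low (by omega)]
    · rw [hc, exoT_A h' (by omega), hf, hcL, exoS_A (by omega)]
    rcases Nat.lt_trichotomy p (m+2) with h2 | h2 | h2
    · rw [hc, exoT_B (by omega), hf, hcL, exoS_B (by omega)]
    · rw [hc, exoT_C h2, hf, hcL, exoS_C (by omega)]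
    · rw [hc, exoT_D (by omega), hf, hcL, exoS_D (by omega)]
  have ccompat : K.HornCompat (m := m+2) k' c := by
    rintro ⟨i, hi'⟩ ⟨j, hj'⟩ hik hjk hij
    simp only [] at hik hjk hij ⊢
    rcases Nat.eq_zero_or_pos i with h0 | h0
    · subst h0
      rw [(show c ⟨0, hi'⟩ = h from by rw [hc]; exact exoT_0 rfl),
        cd0 j hj' (by omega) hjk]
    · rw [cptface j hj' (by omega) i h0 (by omega),
        cptface i hi' h0 (j-1) (by omega) (by omega)]
  obtain ⟨W, hW⟩ := hK (m+2) k' (by omega) c ccompat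
  refine ⟨K.d (m+2) k' W, h, W, ?_, hmem, ?_⟩
  · constructor
    · have := K.dd (m+1) 0 k' (by omega) (by omega) W
      rw [this, hW ⟨0, by omega⟩ (by simp only []; omega),
        (show c ⟨0, _⟩ = h from by rw [hc]; exact exoT_0 rfl)]
      exact L.d_mem (m+1) (k'-1) (by omega) h hmem
    · rintro ⟨i, hi'⟩ h1
      simp only [] at h1 ⊢
      rcases Nat.lt_or_ge i k' with hlt | hge
      · rw [K.dd (m+1) i k' (by omega) (by omega) W,
          hW ⟨i, by omega⟩ (by simp only []; omega),
          cptface i (by omega) h1 (k'-1) (by omega) (by omega)]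
      · have hdd := K.dd (m+1) k' (i+1) (by omega) (by omega) W
        have : K.d (m+1) i (K.d (m+2) k' W) = K.d (m+1) k' (K.d (m+2) (i+1) W) := by
          exact hdd.symm
        rw [this, hW ⟨i+1, by omega⟩ (by simp only []; omega),
          cptface (i+1) (by omega) (by omega) k' (by omega) (by omega)]
  · funext p
    obtain ⟨p, hp⟩ := p
    show K.d (m+2) p W = _
    simp only []
    by_cases hpk : p = k'
    · rw [if_pos hpk, hpk]
    · rw [if_neg hpk, hW ⟨p, hp⟩ (by simp only []; exact hpk), hc]

end SmallFill

end SSetC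
namespace SSetC

section WitSit

variable {K : SSetC} {L : Subcomplex K} {b : K.obj 0} {m : ℕ}

lemma relMulTuple_eq (h x y z : K.obj (m+2)) :
    K.relMulTuple b h x y z = exoT K b m h (K.basept b (m+2)) y z x := by
  funext p
  obtain ⟨p, hp⟩ := p
  simp only [relMulTuple]
  rcases Nat.eq_zero_or_pos p with h0 | h0
  · subst h0
    rw [if_pos rfl]
    exact (exoT_0 rfl).symm
  rcases Nat.lt_trichotomy p m with h' | h' | h'
  · rw [if_neg (by omega), if_pos (by omega)]
    exact (exoT_low h0 h').symm
  · rw [if_neg (by omega), if_pos (by omega)]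
    exact (exoT_A h' (by omega)).symm
  rcases Nat.lt_trichotomy p (m+2) with h2 | h2 | h2
  · rw [if_neg (by omega), if_neg (by omega), if_pos (by omega)]
    exact (exoT_B (by omega)).symm
  · rw [if_neg (by omega), if_neg (by omega), if_neg (by omega), if_pos (by omega)]
    exact (exoT_C h2).symm
  · rw [if_neg (by omega), if_neg (by omega), if_neg (by omega), if_neg (by omega)]
    exact (exoT_D (by omega)).symm

variable (K L b) in
/-- the shifted (`Sit`) product witness relation -/
def SitW (x y z : K.obj (m+2)) : Prop :=
  ∃ h ∈ L.mem (m+2), ∃ W : K.obj (m+3),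
    K.bdry W = exoT K b m h y z x (K.basept b (m+2))

lemma wit_iff_exo {x y z : K.obj (m+2)} :
    K.RelMulWitness L b x y z ↔ ∃ h ∈ L.mem (m+2), ∃ W : K.obj (m+3),
      K.bdry W = exoT K b m h (K.basept b (m+2)) y z x := by
  unfold RelMulWitness IsBoundary
  simp only [relMulTuple_eq]

/-- replacing the value of an `exoT` tuple at position `m+1` -/
lemma override_B (h a0 b0 c0 d0 w : K.obj (m+2)) :
    (fun p : Fin (m+4) => if (p:ℕ) = m+1 then w else exoT K b m h a0 b0 c0 d0 p)
      = exoT K b m h a0 w c0 d0 := by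
  funext p
  obtain ⟨p, hp⟩ := p
  simp only []
  rcases Nat.eq_zero_or_pos p with h0 | h0
  · subst h0; rw [if_neg (by omega), exoT_0 rfl, exoT_0 rfl]
  rcases Nat.lt_trichotomy p m with h' | h' | h'
  · rw [if_neg (by omega), exoT_low h0 h', exoT_low h0 h']
  · rw [if_neg (by omega), exoT_A h' (by omega), exoT_A h' (by omega)]
  rcases Nat.lt_trichotomy p (m+2) with h2 | h2 | h2
  · rw [if_pos (by omega), exoT_B (by omega)]
  · rw [if_neg (by omega), exoT_C h2, exoT_C h2]
  · rw [if_neg (by omega), exoT_D (by omega), exoT_D (by omega)]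

lemma override_C (h a0 b0 c0 d0 w : K.obj (m+2)) :
    (fun p : Fin (m+4) => if (p:ℕ) = m+2 then w else exoT K b m h a0 b0 c0 d0 p)
      = exoT K b m h a0 b0 w d0 := by
  funext p
  obtain ⟨p, hp⟩ := p
  simp only []
  rcases Nat.eq_zero_or_pos p with h0 | h0
  · subst h0; rw [if_neg (by omega), exoT_0 rfl, exoT_0 rfl]
  rcases Nat.lt_trichotomy p m with h' | h' | h'
  · rw [if_neg (by omega), exoT_low h0 h', exoT_low h0 h']
  · rw [if_neg (by omega), exoT_A h' (by omega), exoT_A h' (by omega)]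
  rcases Nat.lt_trichotomy p (m+2) with h2 | h2 | h2
  · rw [if_neg (by omega), exoT_B (by omega), exoT_B (by omega)]
  · rw [if_pos h2, exoT_C h2]
  · rw [if_neg (by omega), exoT_D (by omega), exoT_D (by omega)]

lemma override_D (h a0 b0 c0 d0 w : K.obj (m+2)) :
    (fun p : Fin (m+4) => if (p:ℕ) = m+3 then w else exoT K b m h a0 b0 c0 d0 p)
      = exoT K b m h a0 b0 c0 w := by
  funext p
  obtain ⟨p, hp⟩ := p
  simp only []
  rcases Nat.eq_zero_or_pos p with h0 | h0
  · subst h0; rw [if_neg (by omega), exoT_0 rfl, exoT_0 rfl]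
  rcases Nat.lt_trichotomy p m with h' | h' | h'
  · rw [if_neg (by omega), exoT_low h0 h', exoT_low h0 h']
  · rw [if_neg (by omega), exoT_A h' (by omega), exoT_A h' (by omega)]
  rcases Nat.lt_trichotomy p (m+2) with h2 | h2 | h2
  · rw [if_neg (by omega), exoT_B (by omega), exoT_B (by omega)]
  · rw [if_neg (by omega), exoT_C h2, exoT_C h2]
  · rw [if_pos (by omega), exoT_D (by omega)]

lemma wit_ex (hK : K.IsKan) (hL : L.IsKan) (hb : b ∈ L.mem 0) {x y : K.obj (m+2)} (hx : K.IsRelSph L b x) (hy : K.IsRelSph L b y) :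
    ∃ z, K.IsRelSph L b z ∧ K.RelMulWitness L b x y z := by
  obtain ⟨w, h, W, hw, hhm, hWb⟩ := smallFill hK hL hb (m+2) (by omega) (by omega)
    (K.basept b (m+2)) y (K.basept b (m+2)) x
    (basept_isRelSph K L b hb (m+1)) hy (basept_isRelSph K L b hb (m+1)) hx
  refine ⟨w, hw, h, hhm, W, ?_⟩
  rw [relMulTuple_eq, hWb, override_C]

lemma wit_div (hK : K.IsKan) (hL : L.IsKan) (hb : b ∈ L.mem 0) {y z : K.obj (m+2)} (hy : K.IsRelSph L b y) (hz : K.IsRelSph L b z) :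
    ∃ a, K.IsRelSph L b a ∧ K.RelMulWitness L b a y z := by
  obtain ⟨w, h, W, hw, hhm, hWb⟩ := smallFill hK hL hb (m+3) (by omega) (by omega)
    (K.basept b (m+2)) y z (K.basept b (m+2))
    (basept_isRelSph K L b hb (m+1)) hy hz (basept_isRelSph K L b hb (m+1))
  refine ⟨w, hw, h, hhm, W, ?_⟩
  rw [relMulTuple_eq, hWb, override_D]

lemma sit_ex (hK : K.IsKan) (hL : L.IsKan) (hb : b ∈ L.mem 0) {x y : K.obj (m+2)} (hx : K.IsRelSph L b x) (hy : K.IsRelSph L b y) :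
    ∃ z, K.IsRelSph L b z ∧ SitW K L b x y z := by
  obtain ⟨w, h, W, hw, hhm, hWb⟩ := smallFill hK hL hb (m+1) (by omega) (by omega)
    y (K.basept b (m+2)) x (K.basept b (m+2))
    hy (basept_isRelSph K L b hb (m+1)) hx (basept_isRelSph K L b hb (m+1))
  refine ⟨w, hw, h, hhm, W, ?_⟩
  rw [hWb, override_B]

lemma sit_inv (hK : K.IsKan) (hL : L.IsKan) (hb : b ∈ L.mem 0) {v : K.obj (m+2)} (hv : K.IsRelSph L b v) :
    ∃ u, K.IsRelSph L b u ∧ SitW K L b u v (K.basept b (m+2)) := by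
  obtain ⟨w, h, W, hw, hhm, hWb⟩ := smallFill hK hL hb (m+2) (by omega) (by omega)
    v (K.basept b (m+2)) (K.basept b (m+2)) (K.basept b (m+2))
    hv (basept_isRelSph K L b hb (m+1)) (basept_isRelSph K L b hb (m+1))
    (basept_isRelSph K L b hb (m+1))
  refine ⟨w, hw, h, hhm, W, ?_⟩
  rw [hWb, override_C]

lemma wit_refl {x : K.obj (m+2)} (hx : K.IsRelSph L b x) :
    K.RelMulWitness L b x (K.basept b (m+2)) x := by
  refine ⟨K.s (m+1) (m+1) (K.d (m+1) 0 x), L.s_mem (m+1) (m+1) (by omega) _ hx.1,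
    K.s (m+2) (m+2) x, ?_⟩
  rw [relMulTuple_eq, bdry_s_top hx]

lemma wit_unit {y : K.obj (m+2)} (hy : K.IsRelSph L b y) :
    K.RelMulWitness L b (K.basept b (m+2)) y y := by
  refine ⟨K.s (m+1) m (K.d (m+1) 0 y), L.s_mem (m+1) m (by omega) _ hy.1,
    K.s (m+2) (m+1) y, ?_⟩
  rw [relMulTuple_eq, bdry_s_mid hy]

lemma sit_low {x : K.obj (m+2)} (hx : K.IsRelSph L b x) (hm : 1 ≤ m) :
    SitW K L b (K.basept b (m+2)) x x := by
  refine ⟨K.s (m+1) (m-1) (K.d (m+1) 0 x), L.s_mem (m+1) (m-1) (by omega) _ hx.1,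
    K.s (m+2) m x, ?_⟩
  rw [bdry_s_low hx hm]

end WitSit

end SSetC
namespace SSetC

section BigFill

variable {K : SSetC} {L : Subcomplex K} {b : K.obj 0} {m : ℕ}

lemma bigFill (hK : K.IsKan) (hL : L.IsKan) (hb : b ∈ L.mem 0)
    (t : ℕ) (ht3 : t ≤ 3)
    {Q0 Q1 Q2 Q3 Q4 : K.obj (m+3)}
    {l0 l1 l2 l3 l4 A0 A1 A2 A3 A4 B0 B1 B2 B3 B4 C0 C1 C2 C3 C4
      D0 D1 D2 D3 D4 : K.obj (m+2)}
    (hQ0 : K.bdry Q0 = exoT K b m l0 A0 B0 C0 D0)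
    (hQ1 : t ≠ 0 → K.bdry Q1 = exoT K b m l1 A1 B1 C1 D1)
    (hQ2 : t ≠ 1 → K.bdry Q2 = exoT K b m l2 A2 B2 C2 D2)
    (hQ3 : t ≠ 2 → K.bdry Q3 = exoT K b m l3 A3 B3 C3 D3)
    (hQ4 : t ≠ 3 → K.bdry Q4 = exoT K b m l4 A4 B4 C4 D4)
    (m0 : l0 ∈ L.mem (m+2)) (m1 : t ≠ 0 → l1 ∈ L.mem (m+2))
    (m2 : t ≠ 1 → l2 ∈ L.mem (m+2)) (m3 : t ≠ 2 → l3 ∈ L.mem (m+2))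
    (m4 : t ≠ 3 → l4 ∈ L.mem (m+2))
    (e1 : t ≠ 0 → A1 = A0) (e2 : t ≠ 1 → A2 = B0) (e3 : t ≠ 2 → A3 = C0)
    (e4 : t ≠ 3 → A4 = D0)
    (e5 : t ≠ 0 → t ≠ 1 → B2 = B1) (e6 : t ≠ 0 → t ≠ 2 → B3 = C1)
    (e7 : t ≠ 0 → t ≠ 3 → B4 = D1)
    (e8 : t ≠ 1 → t ≠ 2 → C3 = C2) (e9 : t ≠ 1 → t ≠ 3 → C4 = D2)
    (e10 : t ≠ 2 → t ≠ 3 → D4 = D3) :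
    ∃ H, H ∈ L.mem (m+3) ∧
      (∀ i : ℕ, (hi : i ≤ m+3) → i ≠ m+t →
        K.d (m+2) i H = lT K b m l0 l1 l2 l3 l4 ⟨i, by omega⟩) ∧
      ∃ Ω : K.obj (m+4), ∀ j : ℕ, (hj : j ≤ m+4) → j ≠ m+1+t →
        K.d (m+3) j Ω = bigT K b m H Q0 Q1 Q2 Q3 Q4 ⟨j, by omega⟩ := by
  classical
  have F0 := ellFaces hQ0
  set cH : Fin (m+4) → K.obj (m+2) := lT K b m l0 l1 l2 l3 l4 with hcH
  have cHmem : ∀ i : Fin (m+4), (i:ℕ) ≠ m+t → cH i ∈ L.mem (m+2) := by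
    rintro ⟨i, hi⟩ hik
    simp only [] at hik
    rcases Nat.lt_trichotomy (i+1) m with h | h | h
    · rw [hcH, lT_low h]; exact basept_mem K L b hb (m+2)
    · rw [hcH, lT_0 h]; exact m0
    rcases Nat.lt_trichotomy i (m+1) with h2 | h2 | h2
    · rw [hcH, lT_1 (by omega)]; exact m1 (by omega)
    · rw [hcH, lT_2 h2]; exact m2 (by omega)
    rcases Nat.lt_trichotomy i (m+3) with h3 | h3 | h3
    · rw [hcH, lT_3 (by omega)]; exact m3 (by omega)
    · rw [hcH, lT_4 h3]; exact m4 (by omega)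
    · omega
  have cHcompat : K.HornCompat (m := m+2) (m+t) cH := by
    rintro ⟨i, hi'⟩ ⟨j, hj'⟩ hik hjk hij
    simp only [] at hik hjk hij ⊢
    rcases Nat.lt_trichotomy (j+1) m with hj1 | hj1 | hj1
    · rw [hcH, lT_low hj1, lT_low (by omega), K.d_basept b (m+1) i (by omega),
        K.d_basept b (m+1) (j-1) (by omega)]
    · rw [hcH, lT_0 hj1, lT_low (by omega), bdry_at K F0 i (by omega),
        exoS_low (by omega), K.d_basept b (m+1) (j-1) (by omega)]
    rcases Nat.lt_trichotomy j (m+1) with hj2 | hj2 | hj2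
    · have ht0 : t ≠ 0 := by omega
      have F1 := ellFaces (hQ1 ht0)
      rcases Nat.lt_trichotomy (i+1) m with hi1 | hi1 | hi1
      · rw [hcH, lT_1 (by omega), lT_low hi1, bdry_at K F1 i (by omega),
          exoS_low (by omega), K.d_basept b (m+1) (j-1) (by omega)]
      · rw [hcH, lT_1 (by omega), lT_0 hi1, bdry_at K F1 i (by omega), exoS_A hi1,
          bdry_at K F0 (j-1) (by omega), exoS_A (by omega)]
        exact congrArg (K.d (m+1) 0) (e1 ht0)
      · omega
    · have ht1 : t ≠ 1 := by omega
      have F2 := ellFaces (hQ2 ht1)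
      rcases Nat.lt_trichotomy (i+1) m with hi1 | hi1 | hi1
      · rw [hcH, lT_2 hj2, lT_low hi1, bdry_at K F2 i (by omega),
          exoS_low (by omega), K.d_basept b (m+1) (j-1) (by omega)]
      · rw [hcH, lT_2 hj2, lT_0 hi1, bdry_at K F2 i (by omega), exoS_A hi1,
          bdry_at K F0 (j-1) (by omega), exoS_B (by omega)]
        exact congrArg (K.d (m+1) 0) (e2 ht1)
      · have ht0 : t ≠ 0 := by omega
        have F1 := ellFaces (hQ1 ht0)
        rw [hcH, lT_2 hj2, lT_1 (by omega), bdry_at K F2 i (by omega),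
          exoS_B (by omega), bdry_at K F1 (j-1) (by omega), exoS_B (by omega)]
        exact congrArg (K.d (m+1) 0) (e5 ht0 ht1)
    rcases Nat.lt_trichotomy j (m+3) with hj3 | hj3 | hj3
    · have ht2 : t ≠ 2 := by omega
      have F3 := ellFaces (hQ3 ht2)
      rcases Nat.lt_trichotomy (i+1) m with hi1 | hi1 | hi1
      · rw [hcH, lT_3 (by omega), lT_low hi1, bdry_at K F3 i (by omega),
          exoS_low (by omega), K.d_basept b (m+1) (j-1) (by omega)]
      · rw [hcH, lT_3 (by omega), lT_0 hi1, bdry_at K F3 i (by omega), exoS_A hi1,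
          bdry_at K F0 (j-1) (by omega), exoS_C (by omega)]
        exact congrArg (K.d (m+1) 0) (e3 ht2)
      rcases Nat.lt_trichotomy i (m+1) with hi2 | hi2 | hi2
      · have ht0 : t ≠ 0 := by omega
        have F1 := ellFaces (hQ1 ht0)
        rw [hcH, lT_3 (by omega), lT_1 (by omega), bdry_at K F3 i (by omega),
          exoS_B (by omega), bdry_at K F1 (j-1) (by omega), exoS_C (by omega)]
        exact congrArg (K.d (m+1) 0) (e6 ht0 ht2)
      · have ht1 : t ≠ 1 := by omega
        have F2 := ellFaces (hQ2 ht1)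
        rw [hcH, lT_3 (by omega), lT_2 hi2, bdry_at K F3 i (by omega),
          exoS_C (by omega), bdry_at K F2 (j-1) (by omega), exoS_C (by omega)]
        exact congrArg (K.d (m+1) 0) (e8 ht1 ht2)
      · omega
    · have ht3' : t ≠ 3 := by omega
      have F4 := ellFaces (hQ4 ht3')
      rcases Nat.lt_trichotomy (i+1) m with hi1 | hi1 | hi1
      · rw [hcH, lT_4 hj3, lT_low hi1, bdry_at K F4 i (by omega),
          exoS_low (by omega), K.d_basept b (m+1) (j-1) (by omega)]
      · rw [hcH, lT_4 hj3, lT_0 hi1, bdry_at K F4 i (by omega), exoS_A hi1,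
          bdry_at K F0 (j-1) (by omega), exoS_D (by omega)]
        exact congrArg (K.d (m+1) 0) (e4 ht3')
      rcases Nat.lt_trichotomy i (m+1) with hi2 | hi2 | hi2
      · have ht0 : t ≠ 0 := by omega
        have F1 := ellFaces (hQ1 ht0)
        rw [hcH, lT_4 hj3, lT_1 (by omega), bdry_at K F4 i (by omega),
          exoS_B (by omega), bdry_at K F1 (j-1) (by omega), exoS_D (by omega)]
        exact congrArg (K.d (m+1) 0) (e7 ht0 ht3')
      · have ht1 : t ≠ 1 := by omega
        have F2 := ellFaces (hQ2 ht1)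
        rw [hcH, lT_4 hj3, lT_2 hi2, bdry_at K F4 i (by omega),
          exoS_C (by omega), bdry_at K F2 (j-1) (by omega), exoS_D (by omega)]
        exact congrArg (K.d (m+1) 0) (e9 ht1 ht3')
      · have ht2 : t ≠ 2 := by omega
        have F3 := ellFaces (hQ3 ht2)
        rw [hcH, lT_4 hj3, lT_3 (by omega), bdry_at K F4 i (by omega),
          exoS_D (by omega), bdry_at K F3 (j-1) (by omega), exoS_D (by omega)]
        exact congrArg (K.d (m+1) 0) (e10 ht2 ht3')
    · omega
  obtain ⟨H, Hmem, Hfaces⟩ := hL (m+2) (m+t) (by omega) cH cHmem cHcompat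
  have Hf : ∀ i : ℕ, (hi : i ≤ m+3) → i ≠ m+t →
      K.d (m+2) i H = lT K b m l0 l1 l2 l3 l4 ⟨i, by omega⟩ := by
    intro i hi hik
    exact Hfaces ⟨i, by omega⟩ (by simp only []; exact hik)
  refine ⟨H, Hmem, Hf, ?_⟩
  set cB : Fin (m+5) → K.obj (m+3) := bigT K b m H Q0 Q1 Q2 Q3 Q4 with hcB
  have cBcompat : K.HornCompat (m := m+3) (m+1+t) cB := by
    rintro ⟨i, hi'⟩ ⟨j, hj'⟩ hik hjk hij
    simp only [] at hik hjk hij ⊢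
    rcases Nat.eq_zero_or_pos i with h0 | h0
    · subst h0
      rw [hcB, bigT_H rfl]
      rcases Nat.lt_trichotomy j m with hj1 | hj1 | hj1
      · rw [bigT_low (by omega) hj1, K.d_basept b (m+2) 0 (by omega),
          Hf (j-1) (by omega) (by omega), lT_low (by omega)]
      · rw [bigT_0 hj1 (by omega), bdry_at K hQ0 0 (by omega), exoT_0 rfl,
          Hf (j-1) (by omega) (by omega), lT_0 (by omega)]
      rcases Nat.lt_trichotomy j (m+2) with hj2 | hj2 | hj2
      · rw [bigT_1 (by omega), bdry_at K (hQ1 (by omega)) 0 (by omega), exoT_0 rfl,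
          Hf (j-1) (by omega) (by omega), lT_1 (by omega)]
      · rw [bigT_2 hj2, bdry_at K (hQ2 (by omega)) 0 (by omega), exoT_0 rfl,
          Hf (j-1) (by omega) (by omega), lT_2 (by omega)]
      rcases Nat.lt_trichotomy j (m+4) with hj3 | hj3 | hj3
      · rw [bigT_3 (by omega), bdry_at K (hQ3 (by omega)) 0 (by omega), exoT_0 rfl,
          Hf (j-1) (by omega) (by omega), lT_3 (by omega)]
      · rw [bigT_4 hj3, bdry_at K (hQ4 (by omega)) 0 (by omega), exoT_0 rfl,
          Hf (j-1) (by omega) (by omega), lT_4 (by omega)]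
      · omega
    rcases Nat.lt_trichotomy i m with hi1 | hi1 | hi1
    · have hjv : K.d (m+2) i (cB ⟨j, hj'⟩) = K.basept b (m+2) := by
        rcases Nat.lt_trichotomy j m with hj1 | hj1 | hj1
        · rw [hcB, bigT_low (by omega) hj1, K.d_basept b (m+2) i (by omega)]
        · rw [hcB, bigT_0 hj1 (by omega), bdry_at K hQ0 i (by omega),
            exoT_low h0 hi1]
        rcases Nat.lt_trichotomy j (m+2) with hj2 | hj2 | hj2
        · rw [hcB, bigT_1 (by omega), bdry_at K (hQ1 (by omega)) i (by omega),
            exoT_low h0 hi1]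
        · rw [hcB, bigT_2 hj2, bdry_at K (hQ2 (by omega)) i (by omega),
            exoT_low h0 hi1]
        rcases Nat.lt_trichotomy j (m+4) with hj3 | hj3 | hj3
        · rw [hcB, bigT_3 (by omega), bdry_at K (hQ3 (by omega)) i (by omega),
            exoT_low h0 hi1]
        · rw [hcB, bigT_4 hj3, bdry_at K (hQ4 (by omega)) i (by omega),
            exoT_low h0 hi1]
        · omega
      rw [hjv, hcB, bigT_low h0 hi1, K.d_basept b (m+2) (j-1) (by omega)]
    · rcases Nat.lt_trichotomy j (m+2) with hj2 | hj2 | hj2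
      · rw [hcB, bigT_1 (by omega), bigT_0 hi1 (by omega),
          bdry_at K (hQ1 (by omega)) i (by omega), exoT_A (by omega) (by omega),
          bdry_at K hQ0 (j-1) (by omega), exoT_A (by omega) (by omega)]
        exact e1 (by omega)
      · rw [hcB, bigT_2 hj2, bigT_0 hi1 (by omega),
          bdry_at K (hQ2 (by omega)) i (by omega), exoT_A (by omega) (by omega),
          bdry_at K hQ0 (j-1) (by omega), exoT_B (by omega)]
        exact e2 (by omega)
      rcases Nat.lt_trichotomy j (m+4) with hj3 | hj3 | hj3
      · rw [hcB, bigT_3 (by omega), bigT_0 hi1 (by omega),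
          bdry_at K (hQ3 (by omega)) i (by omega), exoT_A (by omega) (by omega),
          bdry_at K hQ0 (j-1) (by omega), exoT_C (by omega)]
        exact e3 (by omega)
      · rw [hcB, bigT_4 hj3, bigT_0 hi1 (by omega),
          bdry_at K (hQ4 (by omega)) i (by omega), exoT_A (by omega) (by omega),
          bdry_at K hQ0 (j-1) (by omega), exoT_D (by omega)]
        exact e4 (by omega)
      · omega
    rcases Nat.lt_trichotomy i (m+2) with hi2 | hi2 | hi2
    · -- i = m+1 : B-components
      have ht0 : t ≠ 0 := by omega
      rcases Nat.lt_trichotomy j (m+3) with hj2 | hj2 | hj2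
      · rw [hcB, bigT_2 (by omega), bigT_1 (by omega),
          bdry_at K (hQ2 (by omega)) i (by omega), exoT_B (by omega),
          bdry_at K (hQ1 ht0) (j-1) (by omega), exoT_B (by omega)]
        exact e5 ht0 (by omega)
      · rw [hcB, bigT_3 hj2, bigT_1 (by omega),
          bdry_at K (hQ3 (by omega)) i (by omega), exoT_B (by omega),
          bdry_at K (hQ1 ht0) (j-1) (by omega), exoT_C (by omega)]
        exact e6 ht0 (by omega)
      · rw [hcB, bigT_4 (by omega), bigT_1 (by omega),
          bdry_at K (hQ4 (by omega)) i (by omega), exoT_B (by omega),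
          bdry_at K (hQ1 ht0) (j-1) (by omega), exoT_D (by omega)]
        exact e7 ht0 (by omega)
    · -- i = m+2 : C-components
      have ht1 : t ≠ 1 := by omega
      rcases Nat.lt_trichotomy j (m+4) with hj2 | hj2 | hj2
      · rw [hcB, bigT_3 (by omega), bigT_2 (by omega),
          bdry_at K (hQ3 (by omega)) i (by omega), exoT_C (by omega),
          bdry_at K (hQ2 ht1) (j-1) (by omega), exoT_C (by omega)]
        exact e8 ht1 (by omega)
      · rw [hcB, bigT_4 hj2, bigT_2 (by omega),
          bdry_at K (hQ4 (by omega)) i (by omega), exoT_C (by omega),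
          bdry_at K (hQ2 ht1) (j-1) (by omega), exoT_D (by omega)]
        exact e9 ht1 (by omega)
      · omega
    · -- i = m+3 : D-components
      have ht2 : t ≠ 2 := by omega
      rw [hcB, bigT_4 (by omega), bigT_3 (by omega),
        bdry_at K (hQ4 (by omega)) i (by omega), exoT_D (by omega),
        bdry_at K (hQ3 ht2) (j-1) (by omega), exoT_D (by omega)]
      exact e10 ht2 (by omega)
  obtain ⟨Ω, hΩ⟩ := hK (m+3) (m+1+t) (by omega) cB cBcompat
  exact ⟨Ω, fun j hj hjk => hΩ ⟨j, by omega⟩ (by simp only []; exact hjk)⟩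

end BigFill

end SSetC
namespace SSetC

section BigSteps

variable {K : SSetC} {L : Subcomplex K} {b : K.obj 0} {m : ℕ}


lemma face_of_fill_lt (r : ℕ) (Ω : K.obj (r+2)) (k i : ℕ) (hik : i < k) (hk : k ≤ r+2) :
    K.d r i (K.d (r+1) k Ω) = K.d r (k-1) (K.d (r+1) i Ω) := K.dd r i k hik hk Ω

lemma face_of_fill_ge (r : ℕ) (Ω : K.obj (r+2)) (k i : ℕ) (hik : k < i+1) (hi : i+1 ≤ r+2) :
    K.d r i (K.d (r+1) k Ω) = K.d r k (K.d (r+1) (i+1) Ω) :=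
  (K.dd r k (i+1) hik hi Ω).symm

lemma bigStep0 (hK : K.IsKan) (hL : L.IsKan) (hb : b ∈ L.mem 0)
    {Q0 Q2 Q3 Q4 : K.obj (m+3)}
    {l0 A0 B0 C0 D0 l2 A2 B2 C2 D2 l3 A3 B3 C3 D3 l4 A4 B4 C4 D4 : K.obj (m+2)}
    (hQ0 : K.bdry Q0 = exoT K b m l0 A0 B0 C0 D0)
    (hQ2 : K.bdry Q2 = exoT K b m l2 A2 B2 C2 D2)
    (hQ3 : K.bdry Q3 = exoT K b m l3 A3 B3 C3 D3)
    (hQ4 : K.bdry Q4 = exoT K b m l4 A4 B4 C4 D4)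
    (m0 : l0 ∈ L.mem (m+2))
    (m2 : l2 ∈ L.mem (m+2))
    (m3 : l3 ∈ L.mem (m+2))
    (m4 : l4 ∈ L.mem (m+2))
    (e2 : A2 = B0)
    (e3 : A3 = C0)
    (e4 : A4 = D0)
    (e8 : C3 = C2)
    (e9 : C4 = D2)
    (e10 : D4 = D3)
    : ∃ lX ∈ L.mem (m+2), ∃ X : K.obj (m+3),
      K.bdry X = exoT K b m lX A0 B2 B3 B4 := by
  obtain ⟨H, Hmem, Hf, Ω, hΩ⟩ := bigFill (m := m) hK hL hb 0 (by omega)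
    (Q1 := K.basept b (m+3)) (l1 := K.basept b (m+2)) (A1 := K.basept b (m+2)) (B1 := K.basept b (m+2)) (C1 := K.basept b (m+2)) (D1 := K.basept b (m+2))
    hQ0 (fun h => absurd rfl h) (fun _ => hQ2) (fun _ => hQ3) (fun _ => hQ4)
    m0 (fun h => absurd rfl h) (fun _ => m2) (fun _ => m3) (fun _ => m4)
    (fun h => absurd rfl h) (fun _ => e2) (fun _ => e3) (fun _ => e4)
    (fun h _ => absurd rfl h) (fun h _ => absurd rfl h) (fun h _ => absurd rfl h)
    (fun _ _ => e8) (fun _ _ => e9) (fun _ _ => e10)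
  refine ⟨K.d (m+2) (m+0) H, L.d_mem (m+2) (m+0) (by omega) H Hmem,
    K.d (m+3) (m+1) Ω, ?_⟩
  funext p
  obtain ⟨i, hi⟩ := p
  show K.d (m+2) i (K.d (m+3) (m+1) Ω) = _
  rcases Nat.eq_zero_or_pos i with h0 | h0
  · subst h0
    rw [face_of_fill_lt (K := K) (m+2) Ω (m+1) 0 (by omega) (by omega),
      hΩ 0 (by omega) (by omega), bigT_H rfl, exoT_0 rfl]
    rfl
  rcases Nat.lt_trichotomy i m with h1 | h1 | h1
  · rw [face_of_fill_lt (K := K) (m+2) Ω (m+1) i (by omega) (by omega),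
      hΩ i (by omega) (by omega), bigT_low h0 h1,
      K.d_basept b (m+2) (m+1-1) (by omega), exoT_low h0 h1]
  · -- i = m
    rw [face_of_fill_lt (K := K) (m+2) Ω (m+1) i (by omega) (by omega),
        hΩ i (by omega) (by omega), bigT_0 h1 (by omega),
        bdry_at K hQ0 (m+1-1) (by omega), exoT_A (by omega) (by omega), exoT_A (by omega) (by omega)]
  rcases Nat.lt_trichotomy i (m+2) with h2 | h2 | h2
  · -- i = m+1
    rw [face_of_fill_ge (K := K) (m+2) Ω (m+1) i (by omega) (by omega),
        hΩ (i+1) (by omega) (by omega), bigT_2 (by omega),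
        bdry_at K hQ2 (m+1) (by omega), exoT_B (by omega), exoT_B (by omega)]
  · -- i = m+2
    rw [face_of_fill_ge (K := K) (m+2) Ω (m+1) i (by omega) (by omega),
        hΩ (i+1) (by omega) (by omega), bigT_3 (by omega),
        bdry_at K hQ3 (m+1) (by omega), exoT_B (by omega), exoT_C (by omega)]
  · -- i = m+3
    rw [face_of_fill_ge (K := K) (m+2) Ω (m+1) i (by omega) (by omega),
        hΩ (i+1) (by omega) (by omega), bigT_4 (by omega),
        bdry_at K hQ4 (m+1) (by omega), exoT_B (by omega), exoT_D (by omega)]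

lemma bigStep1 (hK : K.IsKan) (hL : L.IsKan) (hb : b ∈ L.mem 0)
    {Q0 Q1 Q3 Q4 : K.obj (m+3)}
    {l0 A0 B0 C0 D0 l1 A1 B1 C1 D1 l3 A3 B3 C3 D3 l4 A4 B4 C4 D4 : K.obj (m+2)}
    (hQ0 : K.bdry Q0 = exoT K b m l0 A0 B0 C0 D0)
    (hQ1 : K.bdry Q1 = exoT K b m l1 A1 B1 C1 D1)
    (hQ3 : K.bdry Q3 = exoT K b m l3 A3 B3 C3 D3)
    (hQ4 : K.bdry Q4 = exoT K b m l4 A4 B4 C4 D4)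
    (m0 : l0 ∈ L.mem (m+2))
    (m1 : l1 ∈ L.mem (m+2))
    (m3 : l3 ∈ L.mem (m+2))
    (m4 : l4 ∈ L.mem (m+2))
    (e1 : A1 = A0)
    (e3 : A3 = C0)
    (e4 : A4 = D0)
    (e6 : B3 = C1)
    (e7 : B4 = D1)
    (e10 : D4 = D3)
    : ∃ lX ∈ L.mem (m+2), ∃ X : K.obj (m+3),
      K.bdry X = exoT K b m lX B0 B1 C3 C4 := by
  obtain ⟨H, Hmem, Hf, Ω, hΩ⟩ := bigFill (m := m) hK hL hb 1 (by omega)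
    (Q2 := K.basept b (m+3)) (l2 := K.basept b (m+2)) (A2 := K.basept b (m+2)) (B2 := K.basept b (m+2)) (C2 := K.basept b (m+2)) (D2 := K.basept b (m+2))
    hQ0 (fun _ => hQ1) (fun h => absurd rfl h) (fun _ => hQ3) (fun _ => hQ4)
    m0 (fun _ => m1) (fun h => absurd rfl h) (fun _ => m3) (fun _ => m4)
    (fun _ => e1) (fun h => absurd rfl h) (fun _ => e3) (fun _ => e4)
    (fun _ h => absurd rfl h) (fun _ _ => e6) (fun _ _ => e7)
    (fun h _ => absurd rfl h) (fun h _ => absurd rfl h) (fun _ _ => e10)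
  refine ⟨K.d (m+2) (m+1) H, L.d_mem (m+2) (m+1) (by omega) H Hmem,
    K.d (m+3) (m+2) Ω, ?_⟩
  funext p
  obtain ⟨i, hi⟩ := p
  show K.d (m+2) i (K.d (m+3) (m+2) Ω) = _
  rcases Nat.eq_zero_or_pos i with h0 | h0
  · subst h0
    rw [face_of_fill_lt (K := K) (m+2) Ω (m+2) 0 (by omega) (by omega),
      hΩ 0 (by omega) (by omega), bigT_H rfl, exoT_0 rfl]
    rfl
  rcases Nat.lt_trichotomy i m with h1 | h1 | h1
  · rw [face_of_fill_lt (K := K) (m+2) Ω (m+2) i (by omega) (by omega),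
      hΩ i (by omega) (by omega), bigT_low h0 h1,
      K.d_basept b (m+2) (m+2-1) (by omega), exoT_low h0 h1]
  · -- i = m
    rw [face_of_fill_lt (K := K) (m+2) Ω (m+2) i (by omega) (by omega),
        hΩ i (by omega) (by omega), bigT_0 h1 (by omega),
        bdry_at K hQ0 (m+2-1) (by omega), exoT_B (by omega), exoT_A (by omega) (by omega)]
  rcases Nat.lt_trichotomy i (m+2) with h2 | h2 | h2
  · -- i = m+1
    rw [face_of_fill_lt (K := K) (m+2) Ω (m+2) i (by omega) (by omega),
        hΩ i (by omega) (by omega), bigT_1 (by omega),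
        bdry_at K hQ1 (m+2-1) (by omega), exoT_B (by omega), exoT_B (by omega)]
  · -- i = m+2
    rw [face_of_fill_ge (K := K) (m+2) Ω (m+2) i (by omega) (by omega),
        hΩ (i+1) (by omega) (by omega), bigT_3 (by omega),
        bdry_at K hQ3 (m+2) (by omega), exoT_C (by omega), exoT_C (by omega)]
  · -- i = m+3
    rw [face_of_fill_ge (K := K) (m+2) Ω (m+2) i (by omega) (by omega),
        hΩ (i+1) (by omega) (by omega), bigT_4 (by omega),
        bdry_at K hQ4 (m+2) (by omega), exoT_C (by omega), exoT_D (by omega)]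

lemma bigStep2 (hK : K.IsKan) (hL : L.IsKan) (hb : b ∈ L.mem 0)
    {Q0 Q1 Q2 Q4 : K.obj (m+3)}
    {l0 A0 B0 C0 D0 l1 A1 B1 C1 D1 l2 A2 B2 C2 D2 l4 A4 B4 C4 D4 : K.obj (m+2)}
    (hQ0 : K.bdry Q0 = exoT K b m l0 A0 B0 C0 D0)
    (hQ1 : K.bdry Q1 = exoT K b m l1 A1 B1 C1 D1)
    (hQ2 : K.bdry Q2 = exoT K b m l2 A2 B2 C2 D2)
    (hQ4 : K.bdry Q4 = exoT K b m l4 A4 B4 C4 D4)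
    (m0 : l0 ∈ L.mem (m+2))
    (m1 : l1 ∈ L.mem (m+2))
    (m2 : l2 ∈ L.mem (m+2))
    (m4 : l4 ∈ L.mem (m+2))
    (e1 : A1 = A0)
    (e2 : A2 = B0)
    (e4 : A4 = D0)
    (e5 : B2 = B1)
    (e7 : B4 = D1)
    (e9 : C4 = D2)
    : ∃ lX ∈ L.mem (m+2), ∃ X : K.obj (m+3),
      K.bdry X = exoT K b m lX C0 C1 C2 D4 := by
  obtain ⟨H, Hmem, Hf, Ω, hΩ⟩ := bigFill (m := m) hK hL hb 2 (by omega)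
    (Q3 := K.basept b (m+3)) (l3 := K.basept b (m+2)) (A3 := K.basept b (m+2)) (B3 := K.basept b (m+2)) (C3 := K.basept b (m+2)) (D3 := K.basept b (m+2))
    hQ0 (fun _ => hQ1) (fun _ => hQ2) (fun h => absurd rfl h) (fun _ => hQ4)
    m0 (fun _ => m1) (fun _ => m2) (fun h => absurd rfl h) (fun _ => m4)
    (fun _ => e1) (fun _ => e2) (fun h => absurd rfl h) (fun _ => e4)
    (fun _ _ => e5) (fun _ h => absurd rfl h) (fun _ _ => e7)
    (fun _ h => absurd rfl h) (fun _ _ => e9) (fun h _ => absurd rfl h)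
  refine ⟨K.d (m+2) (m+2) H, L.d_mem (m+2) (m+2) (by omega) H Hmem,
    K.d (m+3) (m+3) Ω, ?_⟩
  funext p
  obtain ⟨i, hi⟩ := p
  show K.d (m+2) i (K.d (m+3) (m+3) Ω) = _
  rcases Nat.eq_zero_or_pos i with h0 | h0
  · subst h0
    rw [face_of_fill_lt (K := K) (m+2) Ω (m+3) 0 (by omega) (by omega),
      hΩ 0 (by omega) (by omega), bigT_H rfl, exoT_0 rfl]
    rfl
  rcases Nat.lt_trichotomy i m with h1 | h1 | h1
  · rw [face_of_fill_lt (K := K) (m+2) Ω (m+3) i (by omega) (by omega),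
      hΩ i (by omega) (by omega), bigT_low h0 h1,
      K.d_basept b (m+2) (m+3-1) (by omega), exoT_low h0 h1]
  · -- i = m
    rw [face_of_fill_lt (K := K) (m+2) Ω (m+3) i (by omega) (by omega),
        hΩ i (by omega) (by omega), bigT_0 h1 (by omega),
        bdry_at K hQ0 (m+3-1) (by omega), exoT_C (by omega), exoT_A (by omega) (by omega)]
  rcases Nat.lt_trichotomy i (m+2) with h2 | h2 | h2
  · -- i = m+1
    rw [face_of_fill_lt (K := K) (m+2) Ω (m+3) i (by omega) (by omega),
        hΩ i (by omega) (by omega), bigT_1 (by omega),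
        bdry_at K hQ1 (m+3-1) (by omega), exoT_C (by omega), exoT_B (by omega)]
  · -- i = m+2
    rw [face_of_fill_lt (K := K) (m+2) Ω (m+3) i (by omega) (by omega),
        hΩ i (by omega) (by omega), bigT_2 (by omega),
        bdry_at K hQ2 (m+3-1) (by omega), exoT_C (by omega), exoT_C (by omega)]
  · -- i = m+3
    rw [face_of_fill_ge (K := K) (m+2) Ω (m+3) i (by omega) (by omega),
        hΩ (i+1) (by omega) (by omega), bigT_4 (by omega),
        bdry_at K hQ4 (m+3) (by omega), exoT_D (by omega), exoT_D (by omega)]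

lemma bigStep3 (hK : K.IsKan) (hL : L.IsKan) (hb : b ∈ L.mem 0)
    {Q0 Q1 Q2 Q3 : K.obj (m+3)}
    {l0 A0 B0 C0 D0 l1 A1 B1 C1 D1 l2 A2 B2 C2 D2 l3 A3 B3 C3 D3 : K.obj (m+2)}
    (hQ0 : K.bdry Q0 = exoT K b m l0 A0 B0 C0 D0)
    (hQ1 : K.bdry Q1 = exoT K b m l1 A1 B1 C1 D1)
    (hQ2 : K.bdry Q2 = exoT K b m l2 A2 B2 C2 D2)
    (hQ3 : K.bdry Q3 = exoT K b m l3 A3 B3 C3 D3)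
    (m0 : l0 ∈ L.mem (m+2))
    (m1 : l1 ∈ L.mem (m+2))
    (m2 : l2 ∈ L.mem (m+2))
    (m3 : l3 ∈ L.mem (m+2))
    (e1 : A1 = A0)
    (e2 : A2 = B0)
    (e3 : A3 = C0)
    (e5 : B2 = B1)
    (e6 : B3 = C1)
    (e8 : C3 = C2)
    : ∃ lX ∈ L.mem (m+2), ∃ X : K.obj (m+3),
      K.bdry X = exoT K b m lX D0 D1 D2 D3 := by
  obtain ⟨H, Hmem, Hf, Ω, hΩ⟩ := bigFill (m := m) hK hL hb 3 (by omega)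
    (Q4 := K.basept b (m+3)) (l4 := K.basept b (m+2)) (A4 := K.basept b (m+2)) (B4 := K.basept b (m+2)) (C4 := K.basept b (m+2)) (D4 := K.basept b (m+2))
    hQ0 (fun _ => hQ1) (fun _ => hQ2) (fun _ => hQ3) (fun h => absurd rfl h)
    m0 (fun _ => m1) (fun _ => m2) (fun _ => m3) (fun h => absurd rfl h)
    (fun _ => e1) (fun _ => e2) (fun _ => e3) (fun h => absurd rfl h)
    (fun _ _ => e5) (fun _ _ => e6) (fun _ h => absurd rfl h)
    (fun _ _ => e8) (fun _ h => absurd rfl h) (fun _ h => absurd rfl h)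
  refine ⟨K.d (m+2) (m+3) H, L.d_mem (m+2) (m+3) (by omega) H Hmem,
    K.d (m+3) (m+4) Ω, ?_⟩
  funext p
  obtain ⟨i, hi⟩ := p
  show K.d (m+2) i (K.d (m+3) (m+4) Ω) = _
  rcases Nat.eq_zero_or_pos i with h0 | h0
  · subst h0
    rw [face_of_fill_lt (K := K) (m+2) Ω (m+4) 0 (by omega) (by omega),
      hΩ 0 (by omega) (by omega), bigT_H rfl, exoT_0 rfl]
    rfl
  rcases Nat.lt_trichotomy i m with h1 | h1 | h1
  · rw [face_of_fill_lt (K := K) (m+2) Ω (m+4) i (by omega) (by omega),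
      hΩ i (by omega) (by omega), bigT_low h0 h1,
      K.d_basept b (m+2) (m+4-1) (by omega), exoT_low h0 h1]
  · -- i = m
    rw [face_of_fill_lt (K := K) (m+2) Ω (m+4) i (by omega) (by omega),
        hΩ i (by omega) (by omega), bigT_0 h1 (by omega),
        bdry_at K hQ0 (m+4-1) (by omega), exoT_D (by omega), exoT_A (by omega) (by omega)]
  rcases Nat.lt_trichotomy i (m+2) with h2 | h2 | h2
  · -- i = m+1
    rw [face_of_fill_lt (K := K) (m+2) Ω (m+4) i (by omega) (by omega),
        hΩ i (by omega) (by omega), bigT_1 (by omega),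
        bdry_at K hQ1 (m+4-1) (by omega), exoT_D (by omega), exoT_B (by omega)]
  · -- i = m+2
    rw [face_of_fill_lt (K := K) (m+2) Ω (m+4) i (by omega) (by omega),
        hΩ i (by omega) (by omega), bigT_2 (by omega),
        bdry_at K hQ2 (m+4-1) (by omega), exoT_D (by omega), exoT_C (by omega)]
  · -- i = m+3
    rw [face_of_fill_lt (K := K) (m+2) Ω (m+4) i (by omega) (by omega),
        hΩ i (by omega) (by omega), bigT_3 (by omega),
        bdry_at K hQ3 (m+4-1) (by omega), exoT_D (by omega), exoT_D (by omega)]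


end BigSteps

end SSetC
namespace SSetC

section Masters

variable {K : SSetC} {L : Subcomplex K} {b : K.obj 0} {m : ℕ}

/-- `a1·b1 = c1`, `a2·b1 = c2`, `a4·a1 = a2` imply `a4·c1 = c2`. -/
lemma master_M (hK : K.IsKan) (hL : L.IsKan) (hb : b ∈ L.mem 0) {a1 b1 c1 a2 c2 a4 : K.obj (m+2)}
    (w1 : K.RelMulWitness L b a1 b1 c1) (w2 : K.RelMulWitness L b a2 b1 c2)
    (w4 : K.RelMulWitness L b a4 a1 a2) :
    K.RelMulWitness L b a4 c1 c2 := by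
  obtain ⟨h1, h1m, U1, hU1⟩ := wit_iff_exo.mp w1
  obtain ⟨h2, h2m, U2, hU2⟩ := wit_iff_exo.mp w2
  obtain ⟨h4, h4m, U4, hU4⟩ := wit_iff_exo.mp w4
  obtain ⟨lX, lXm, X, hX⟩ := bigStep2 hK hL hb
    (bdry_pt_big) hU1 hU2 hU4 (basept_mem K L b hb (m+2)) h1m h2m h4m
    rfl rfl rfl rfl rfl rfl
  exact wit_iff_exo.mpr ⟨lX, lXm, X, hX⟩

/-- `a2·b2 = c`, `a3·b3 = c`, `a3·b4 = a2` imply `b4·b2 = b3`. -/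
lemma master_M' (hK : K.IsKan) (hL : L.IsKan) (hb : b ∈ L.mem 0) {a2 b2 c a3 b3 b4 : K.obj (m+2)}
    (w2 : K.RelMulWitness L b a2 b2 c) (w3 : K.RelMulWitness L b a3 b3 c)
    (w4 : K.RelMulWitness L b a3 b4 a2) :
    K.RelMulWitness L b b4 b2 b3 := by
  obtain ⟨h2, h2m, U2, hU2⟩ := wit_iff_exo.mp w2
  obtain ⟨h3, h3m, U3, hU3⟩ := wit_iff_exo.mp w3
  obtain ⟨h4, h4m, U4, hU4⟩ := wit_iff_exo.mp w4
  obtain ⟨lX, lXm, X, hX⟩ := bigStep0 hK hL hb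
    (bdry_pt_big) hU2 hU3 hU4 (basept_mem K L b hb (m+2)) h2m h3m h4m
    rfl rfl rfl rfl rfl rfl
  exact wit_iff_exo.mpr ⟨lX, lXm, X, hX⟩

/-- `a1·b1 = c1`, `a3·c1 = c3`, `a3·a1 = c4` imply `c4·b1 = c3`. -/
lemma master_M'' (hK : K.IsKan) (hL : L.IsKan) (hb : b ∈ L.mem 0) {a1 b1 c1 a3 c3 c4 : K.obj (m+2)}
    (w1 : K.RelMulWitness L b a1 b1 c1) (w3 : K.RelMulWitness L b a3 c1 c3)
    (w4 : K.RelMulWitness L b a3 a1 c4) :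
    K.RelMulWitness L b c4 b1 c3 := by
  obtain ⟨h1, h1m, U1, hU1⟩ := wit_iff_exo.mp w1
  obtain ⟨h3, h3m, U3, hU3⟩ := wit_iff_exo.mp w3
  obtain ⟨h4, h4m, U4, hU4⟩ := wit_iff_exo.mp w4
  obtain ⟨lX, lXm, X, hX⟩ := bigStep1 hK hL hb
    (bdry_pt_big) hU1 hU3 hU4 (basept_mem K L b hb (m+2)) h1m h3m h4m
    rfl rfl rfl rfl rfl rfl
  exact wit_iff_exo.mpr ⟨lX, lXm, X, hX⟩

/-- `a1·b1 = c1`, `a2·b1 = c2`, `a3·c1 = c2` imply `a3·a1 = a2`. -/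
lemma master_M''' (hK : K.IsKan) (hL : L.IsKan) (hb : b ∈ L.mem 0) {a1 b1 c1 a2 c2 a3 : K.obj (m+2)}
    (w1 : K.RelMulWitness L b a1 b1 c1) (w2 : K.RelMulWitness L b a2 b1 c2)
    (w3 : K.RelMulWitness L b a3 c1 c2) :
    K.RelMulWitness L b a3 a1 a2 := by
  obtain ⟨h1, h1m, U1, hU1⟩ := wit_iff_exo.mp w1
  obtain ⟨h2, h2m, U2, hU2⟩ := wit_iff_exo.mp w2
  obtain ⟨h3, h3m, U3, hU3⟩ := wit_iff_exo.mp w3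
  obtain ⟨lX, lXm, X, hX⟩ := bigStep3 hK hL hb
    (bdry_pt_big) hU1 hU2 hU3 (basept_mem K L b hb (m+2)) h1m h2m h3m
    rfl rfl rfl rfl rfl rfl
  exact wit_iff_exo.mpr ⟨lX, lXm, X, hX⟩

/-- the square-shaped simplex `(u,u,v,v)` (needs `m ≥ 1`) -/
lemma exoG (hK : K.IsKan) (hL : L.IsKan) (hb : b ∈ L.mem 0) (hm : 1 ≤ m) {u v : K.obj (m+2)} (hu : K.IsRelSph L b u)
    (hv : K.IsRelSph L b v) :
    ∃ lG ∈ L.mem (m+2), ∃ X : K.obj (m+3), K.bdry X = exoT K b m lG u u v v := by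
  obtain ⟨lX, lXm, X, hX⟩ := bigStep1 hK hL hb
    (bdry_s_low hu hm) (bdry_s_low hu hm) (bdry_s_top hv) (bdry_s_top hv)
    (L.s_mem (m+1) (m-1) (by omega) _ hu.1) (L.s_mem (m+1) (m-1) (by omega) _ hu.1)
    (L.s_mem (m+1) (m+1) (by omega) _ hv.1) (L.s_mem (m+1) (m+1) (by omega) _ hv.1)
    rfl rfl rfl rfl rfl rfl
  exact ⟨lX, lXm, X, hX⟩

/-- Bridge: the shifted product agrees with the product (needs `m ≥ 1`). -/
lemma bridge (hK : K.IsKan) (hL : L.IsKan) (hb : b ∈ L.mem 0) (hm : 1 ≤ m) {u v w : K.obj (m+2)} (hu : K.IsRelSph L b u)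
    (hv : K.IsRelSph L b v) (hs : SitW K L b v u w) :
    K.RelMulWitness L b v u w := by
  obtain ⟨lG, lGm, G, hG⟩ := exoG hK hL hb hm hu hv
  obtain ⟨hS, hSm, S, hSb⟩ := hs
  obtain ⟨lX, lXm, X, hX⟩ := bigStep0 hK hL hb
    (bdry_s_mid hu) hG hSb (bdry_s_mid hv)
    (L.s_mem (m+1) m (by omega) _ hu.1) lGm hSm
    (L.s_mem (m+1) m (by omega) _ hv.1)
    rfl rfl rfl rfl rfl rfl
  exact wit_iff_exo.mpr ⟨lX, lXm, X, hX⟩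

/-- Rule R4: comparison of two squares over the same `(A,B)`. -/
lemma ruleR4 (hK : K.IsKan) (hL : L.IsKan) (hb : b ∈ L.mem 0) (hm : 1 ≤ m) {A B C D C' D' δ : K.obj (m+2)}
    (hA : K.IsRelSph L b A)
    (hY1 : ∃ l ∈ L.mem (m+2), ∃ Y1 : K.obj (m+3), K.bdry Y1 = exoT K b m l A B C D)
    (hY2 : ∃ l ∈ L.mem (m+2), ∃ Y2 : K.obj (m+3), K.bdry Y2 = exoT K b m l A B C' D')
    (wδ : K.RelMulWitness L b δ C C') :
    K.RelMulWitness L b δ D D' := by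
  obtain ⟨l1, l1m, Y1, hY1b⟩ := hY1
  obtain ⟨l2, l2m, Y2, hY2b⟩ := hY2
  obtain ⟨hδ, hδm, Wδ, hWδ⟩ := wit_iff_exo.mp wδ
  obtain ⟨lX, lXm, X, hX⟩ := bigStep3 hK hL hb
    (bdry_s_low hA hm) hY1b hY2b hWδ
    (L.s_mem (m+1) (m-1) (by omega) _ hA.1) l1m l2m hδm
    rfl rfl rfl rfl rfl rfl
  exact wit_iff_exo.mpr ⟨lX, lXm, X, hX⟩

/-- Rule R5: rotating a square by `Sit`-witnesses. -/
lemma ruleR5 (hK : K.IsKan) (hL : L.IsKan) (hb : b ∈ L.mem 0) (hm : 1 ≤ m) {A B C D x1 z1 x3 x4 : K.obj (m+2)}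
    (hY : ∃ l ∈ L.mem (m+2), ∃ Y : K.obj (m+3), K.bdry Y = exoT K b m l A B C D)
    (hs1 : SitW K L b x1 A z1) (hs3 : SitW K L b x3 C x1)
    (hs4 : SitW K L b x4 D (K.basept b (m+2))) :
    ∃ l ∈ L.mem (m+2), ∃ X : K.obj (m+3), K.bdry X = exoT K b m l B z1 x3 x4 := by
  obtain ⟨lY, lYm, Y, hYb⟩ := hY
  obtain ⟨h1, h1m, S1, hS1⟩ := hs1
  obtain ⟨h3, h3m, S3, hS3⟩ := hs3
  obtain ⟨h4, h4m, S4, hS4⟩ := hs4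
  obtain ⟨lX, lXm, X, hX⟩ := bigStep1 hK hL hb
    hYb hS1 hS3 hS4 lYm h1m h3m h4m
    rfl rfl rfl rfl rfl rfl
  exact ⟨lX, lXm, X, hX⟩

end Masters

end SSetC
namespace SSetC

section Equiv

variable {K : SSetC} {L : Subcomplex K} {b : K.obj 0} {r : ℕ}

/-- the homotopy tuple `(g, ⋆^r, x, y)` -/
def rT (K : SSetC) (b : K.obj 0) (r : ℕ) (g x y : K.obj (r+1)) :
    Fin (r+3) → K.obj (r+1) :=
  fun i => if (i:ℕ) = 0 then g else if (i:ℕ) < r+1 then K.basept b (r+1)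
    else if (i:ℕ) = r+1 then x else y

section evalR
variable {g x y : K.obj (r+1)} {i : ℕ} {hi : i < r+3}
lemma rT_0 (e : i = 0) : rT K b r g x y ⟨i, hi⟩ = g := by
  simp only [rT]; rw [if_pos e]
lemma rT_low (e1 : 1 ≤ i) (e2 : i < r+1) :
    rT K b r g x y ⟨i, hi⟩ = K.basept b (r+1) := by
  simp only [rT]; rw [if_neg (by omega), if_pos e2]
lemma rT_x (e : i = r+1) : rT K b r g x y ⟨i, hi⟩ = x := by
  simp only [rT]; rw [if_neg (by omega), if_neg (by omega), if_pos e]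
lemma rT_y (e : i = r+2) : rT K b r g x y ⟨i, hi⟩ = y := by
  simp only [rT]
  rw [if_neg (by omega), if_neg (by omega), if_neg (by omega)]
end evalR

lemma relTuple_eq_rT {x y : K.obj (r+1)} (hx : K.IsRelSph L b x)
    (g : K.obj (r+1)) : K.relTuple g x y = rT K b r g x y := by
  funext p
  obtain ⟨i, hi⟩ := p
  simp only [relTuple]
  rcases Nat.eq_zero_or_pos i with h0 | h0
  · subst h0
    rw [if_pos rfl]
    exact (rT_0 rfl).symm
  rcases Nat.lt_trichotomy i (r+1) with h1 | h1 | h1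
  · rw [if_neg (by omega), if_pos h1, relSph_d K L b hx i h0 (by omega),
      K.s_basept b r r le_rfl]
    exact (rT_low h0 h1).symm
  · rw [if_neg (by omega), if_neg (by omega), if_pos h1]
    exact (rT_x h1).symm
  · rw [if_neg (by omega), if_neg (by omega), if_neg (by omega)]
    exact (rT_y (by omega)).symm

lemma homotopicRel_iff {x y : K.obj (r+1)} (hx : K.IsRelSph L b x)
    (hy : K.IsRelSph L b y) :
    K.HomotopicRel L x y ↔ ∃ g ∈ L.mem (r+1), ∃ w : K.obj (r+2),
      K.bdry w = rT K b r g x y := by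
  constructor
  · rintro ⟨_, _, _, g, gm, hbd⟩
    obtain ⟨w, hw⟩ := hbd
    exact ⟨g, gm, w, by rw [← relTuple_eq_rT hx g]; exact hw⟩
  · rintro ⟨g, gm, w, hw⟩
    refine ⟨fun i h1 h2 => ?_, hx.1, hy.1, g, gm, ?_⟩
    · rw [relSph_d K L b hx i h1 h2, relSph_d K L b hy i h1 h2]
    · rw [relTuple_eq_rT hx g]; exact ⟨w, hw⟩

lemma hrefl {x : K.obj (r+1)} (hx : K.IsRelSph L b x) : K.HomotopicRel L x x := by
  rw [homotopicRel_iff hx hx]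
  refine ⟨K.s r r (K.d r 0 x), L.s_mem r r le_rfl _ hx.1, K.s (r+1) (r+1) x, ?_⟩
  funext p
  obtain ⟨i, hi⟩ := p
  show K.d (r+1) i (K.s (r+1) (r+1) x) = _
  rcases Nat.lt_trichotomy i (r+1) with h1 | h1 | h1
  · rw [K.ds_lt r i (r+1) h1 le_rfl x]
    rcases Nat.eq_zero_or_pos i with h0 | h0
    · subst h0
      exact (rT_0 rfl).symm
    · rw [relSph_d K L b hx i h0 (by omega), K.s_basept b r (r+1-1) (by omega)]
      exact (rT_low h0 h1).symm
  · have e : K.d (r+1) i (K.s (r+1) (r+1) x) = x := by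
      rw [h1]; exact K.ds_self (r+1) (r+1) le_rfl x
    rw [e]; exact (rT_x h1).symm
  · have h2 : i = r+2 := by omega
    have e : K.d (r+1) i (K.s (r+1) (r+1) x) = x := by
      rw [h2]; exact K.ds_succ (r+1) (r+1) le_rfl x
    rw [e]; exact (rT_y h2).symm

/-- From `x ∼ y` and `x ∼ z` conclude `y ∼ z`. -/
lemma hsymtrans {x y z : K.obj (r+1)} (hK : K.IsKan) (hL : L.IsKan)
    (hb : b ∈ L.mem 0) (hx : K.IsRelSph L b x)
    (hy : K.IsRelSph L b y) (hz : K.IsRelSph L b z)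
    (h1 : K.HomotopicRel L x y) (h2 : K.HomotopicRel L x z) :
    K.HomotopicRel L y z := by
  classical
  obtain ⟨g1, g1m, w1, hw1⟩ := (homotopicRel_iff hx hy).mp h1
  obtain ⟨g2, g2m, w2, hw2⟩ := (homotopicRel_iff hx hz).mp h2
  have gface : ∀ (w : K.obj (r+2)) (g u v : K.obj (r+1)),
      K.bdry w = rT K b r g u v → ∀ i : ℕ, i ≤ r+1 →
      K.d r i (K.d (r+1) 0 w) =
        (if i < r then K.basept b r else if i = r then K.d r 0 u else K.d r 0 v) := by
    intro w g u v hw i hi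
    rw [K.dd0 r i (by omega) w, bdry_at K hw (i+1) (by omega)]
    rcases Nat.lt_trichotomy i r with hh | hh | hh
    · rw [rT_low (by omega) (by omega), K.d_basept b r 0 (by omega), if_pos hh]
    · rw [rT_x (by omega), if_neg (by omega), if_pos hh]
    · rw [rT_y (by omega), if_neg (by omega), if_neg (by omega)]
  set cL : Fin (r+3) → K.obj (r+1) := fun p =>
    if (p:ℕ) < r then K.basept b (r+1)
    else if (p:ℕ) = r then K.d (r+1) 0 w1 else K.d (r+1) 0 w2 with hcL
  have hd0w1 : K.d (r+1) 0 w1 = g1 := (bdry_at K hw1 0 (by omega)).trans (rT_0 rfl)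
  have hd0w2 : K.d (r+1) 0 w2 = g2 := (bdry_at K hw2 0 (by omega)).trans (rT_0 rfl)
  have cLmem : ∀ p : Fin (r+3), (p:ℕ) ≠ r+2 → cL p ∈ L.mem (r+1) := by
    rintro ⟨p, hp⟩ _
    simp only [hcL]
    split_ifs
    · exact basept_mem K L b hb (r+1)
    · rw [hd0w1]; exact g1m
    · rw [hd0w2]; exact g2m
  have cLcompat : K.HornCompat (m := r+1) (r+2) cL := by
    rintro ⟨i, hi'⟩ ⟨j, hj'⟩ hik hjk hij
    simp only [] at hik hjk hij ⊢
    rcases Nat.lt_trichotomy j r with hj1 | hj1 | hj1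
    · simp only [hcL]
      rw [if_pos hj1, if_pos (by omega), K.d_basept b r i (by omega),
        K.d_basept b r (j-1) (by omega)]
    · simp only [hcL]
      rw [if_neg (by omega), if_pos hj1, if_pos (by omega),
        gface w1 g1 x y hw1 i (by omega), if_pos (by omega),
        K.d_basept b r (j-1) (by omega)]
    · have hj2 : j = r+1 := by omega
      rcases Nat.lt_trichotomy i r with hi1 | hi1 | hi1
      · simp only [hcL]
        rw [if_neg (by omega), if_neg (by omega), if_pos hi1,
          gface w2 g2 x z hw2 i (by omega), if_pos (by omega),
          K.d_basept b r (j-1) (by omega)]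
      · simp only [hcL]
        rw [if_neg (by omega), if_neg (by omega), if_neg (by omega), if_pos hi1,
          gface w2 g2 x z hw2 i (by omega), if_neg (by omega), if_pos hi1,
          gface w1 g1 x y hw1 (j-1) (by omega), if_neg (by omega), if_pos (by omega)]
      · omega
  obtain ⟨h, hmem, hfaces⟩ := hL (r+1) (r+2) (by omega) cL cLmem cLcompat
  have hface' : ∀ i : ℕ, (hi : i ≤ r+2) → i ≠ r+2 →
      K.d (r+1) i h = cL ⟨i, by omega⟩ := by
    intro i hi hik
    exact hfaces ⟨i, by omega⟩ (by simp only []; exact hik)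
  set cM : Fin (r+4) → K.obj (r+2) := fun p =>
    if (p:ℕ) = 0 then h else if (p:ℕ) < r+1 then K.basept b (r+2)
    else if (p:ℕ) = r+1 then w1 else w2 with hcM
  have cMcompat : K.HornCompat (m := r+2) (r+3) cM := by
    rintro ⟨i, hi'⟩ ⟨j, hj'⟩ hik hjk hij
    simp only [] at hik hjk hij ⊢
    rcases Nat.eq_zero_or_pos i with h0 | h0
    · subst h0
      rcases Nat.lt_trichotomy j (r+1) with hj1 | hj1 | hj1
      · simp only [hcM]
        rw [if_pos trivial, if_neg (by omega), if_pos hj1,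
          K.d_basept b (r+1) 0 (by omega), hface' (j-1) (by omega) (by omega), hcL]
        simp only []
        rw [if_pos (by omega)]
      · simp only [hcM]
        rw [if_pos trivial, if_neg (by omega), if_neg (by omega), if_pos hj1,
          hface' (j-1) (by omega) (by omega), hcL]
        simp only []
        rw [if_neg (by omega), if_pos (by omega)]
      · have hj2 : j = r+2 := by omega
        simp only [hcM]
        rw [if_pos trivial, if_neg (by omega), if_neg (by omega), if_neg (by omega),
          hface' (j-1) (by omega) (by omega), hcL]
        simp only []
        rw [if_neg (by omega), if_neg (by omega)]
    rcases Nat.lt_trichotomy j (r+1) with hj1 | hj1 | hj1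
    · simp only [hcM]
      rw [if_neg (by omega), if_pos hj1, if_neg (by omega), if_pos (by omega),
        K.d_basept b (r+1) i (by omega), K.d_basept b (r+1) (j-1) (by omega)]
    · rcases Nat.lt_trichotomy i (r+1) with hi1 | hi1 | hi1
      · simp only [hcM]
        rw [if_neg (by omega), if_neg (by omega), if_pos hj1,
          bdry_at K hw1 i (by omega), rT_low h0 hi1, if_neg (by omega),
          if_pos hi1, K.d_basept b (r+1) (j-1) (by omega)]
      · omega
      · omega
    · have hj2 : j = r+2 := by omega
      rcases Nat.lt_trichotomy i (r+1) with hi1 | hi1 | hi1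
      · simp only [hcM]
        rw [if_neg (by omega), if_neg (by omega), if_neg (by omega),
          bdry_at K hw2 i (by omega), rT_low h0 hi1, if_neg (by omega),
          if_pos hi1, K.d_basept b (r+1) (j-1) (by omega)]
      · simp only [hcM]
        rw [if_neg (by omega), if_neg (by omega), if_neg (by omega),
          bdry_at K hw2 i (by omega), rT_x hi1, if_neg (by omega),
          if_neg (by omega), if_pos (by omega), bdry_at K hw1 (j-1) (by omega),
          rT_x (by omega)]
      · omega
  obtain ⟨Ω, hΩ⟩ := hK (r+2) (r+3) (by omega) cM cMcompat
  have hΩ' : ∀ p : ℕ, (hp : p ≤ r+3) → p ≠ r+3 →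
      K.d (r+2) p Ω = cM ⟨p, by omega⟩ := by
    intro p hp hpk
    exact hΩ ⟨p, by omega⟩ (by simp only []; exact hpk)
  rw [homotopicRel_iff hy hz]
  refine ⟨K.d (r+1) (r+2) h, L.d_mem (r+1) (r+2) (by omega) h hmem,
    K.d (r+2) (r+3) Ω, ?_⟩
  funext p
  obtain ⟨i, hi⟩ := p
  show K.d (r+1) i (K.d (r+2) (r+3) Ω) = _
  rw [face_of_fill_lt (K := K) (r+1) Ω (r+3) i (by omega) (by omega),
    hΩ' i (by omega) (by omega)]
  rcases Nat.eq_zero_or_pos i with h0 | h0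
  · subst h0
    simp only [hcM]
    rw [if_pos trivial]
    exact (rT_0 rfl).symm
  rcases Nat.lt_trichotomy i (r+1) with h1 | h1 | h1
  · simp only [hcM]
    rw [if_neg (by omega), if_pos h1, K.d_basept b (r+1) (r+3-1) (by omega)]
    exact (rT_low h0 h1).symm
  · simp only [hcM]
    rw [if_neg (by omega), if_neg (by omega), if_pos h1,
      bdry_at K hw1 (r+3-1) (by omega), rT_y (by omega)]
    exact (rT_x h1).symm
  · simp only [hcM]
    rw [if_neg (by omega), if_neg (by omega), if_neg (by omega),
      bdry_at K hw2 (r+3-1) (by omega), rT_y (by omega)]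
    exact (rT_y (by omega)).symm

/-- relative homotopy is an equivalence relation on the representatives -/
lemma homotopic_equiv (hK : K.IsKan) (hL : L.IsKan) (hb : b ∈ L.mem 0) (r : ℕ) :
    Equivalence (fun x y : K.RelSph L b r => K.HomotopicRel L x.1 y.1) := by
  constructor
  · exact fun x => hrefl x.2
  · intro x y h
    exact hsymtrans hK hL hb x.2 y.2 x.2 h (hrefl x.2)
  · intro x y z hxy hyz
    exact hsymtrans hK hL hb y.2 x.2 z.2
      (hsymtrans hK hL hb x.2 y.2 x.2 hxy (hrefl x.2)) hyz

end Equiv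

end SSetC
namespace SSetC

section GroupAlg

variable {K : SSetC} {L : Subcomplex K} {b : K.obj 0} {m : ℕ}

lemma rT_eq_exoT (g x y : K.obj (m+2)) :
    rT K b (m+1) g x y =
      exoT K b m g (K.basept b (m+2)) (K.basept b (m+2)) x y := by
  funext p
  obtain ⟨i, hi⟩ := p
  rcases Nat.eq_zero_or_pos i with h0 | h0
  · subst h0; rw [rT_0 rfl, exoT_0 rfl]
  rcases Nat.lt_trichotomy i m with h1 | h1 | h1
  · rw [rT_low h0 (by omega), exoT_low h0 h1]
  · rw [rT_low h0 (by omega), exoT_A h1 (by omega)]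
  rcases Nat.lt_trichotomy i (m+2) with h2 | h2 | h2
  · rw [rT_low h0 (by omega), exoT_B (by omega)]
  · rw [rT_x (by omega), exoT_C h2]
  · rw [rT_y (by omega), exoT_D (by omega)]

/-- homotopy of spheres is a degenerate multiplication witness -/
lemma hom_iff_wit {x y : K.obj (m+2)} (hx : K.IsRelSph L b x)
    (hy : K.IsRelSph L b y) :
    K.HomotopicRel L x y ↔ K.RelMulWitness L b y (K.basept b (m+2)) x := by
  rw [homotopicRel_iff (r := m+1) hx hy, wit_iff_exo]
  simp only [rT_eq_exoT]

/-- uniqueness of products up to homotopy -/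
lemma wit_uniq (hK : K.IsKan) (hL : L.IsKan) (hb : b ∈ L.mem 0)
    {A B C C' : K.obj (m+2)} (hB : K.IsRelSph L b B) (hC : K.IsRelSph L b C)
    (hC' : K.IsRelSph L b C')
    (w : K.RelMulWitness L b A B C) (w' : K.RelMulWitness L b A B C') :
    K.HomotopicRel L C C' :=
  (hom_iff_wit hC hC').mpr (master_M'' hK hL hb (wit_refl hB) w w')

/-- `x ∼ x'` gives the degenerate witness `⋆·x' = x`. -/
lemma wit_subl (hK : K.IsKan) (hL : L.IsKan) (hb : b ∈ L.mem 0)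
    {x x' : K.obj (m+2)} (hx : K.IsRelSph L b x) (hx' : K.IsRelSph L b x')
    (h : K.HomotopicRel L x x') :
    K.RelMulWitness L b (K.basept b (m+2)) x' x :=
  master_M''' hK hL hb ((hom_iff_wit hx hx').mp h) (wit_refl hx) (wit_unit hx)

lemma wit_congr_left (hK : K.IsKan) (hL : L.IsKan) (hb : b ∈ L.mem 0)
    {x x' B C : K.obj (m+2)} (hx : K.IsRelSph L b x) (hx' : K.IsRelSph L b x')
    (hC : K.IsRelSph L b C) (h : K.HomotopicRel L x x')
    (w : K.RelMulWitness L b x B C) :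
    K.RelMulWitness L b x' B C :=
  master_M' hK hL hb w (wit_unit hC) (wit_subl hK hL hb hx hx' h)

lemma wit_congr_right (hK : K.IsKan) (hL : L.IsKan) (hb : b ∈ L.mem 0)
    {A y y' C : K.obj (m+2)} (hy : K.IsRelSph L b y) (hy' : K.IsRelSph L b y')
    (hC : K.IsRelSph L b C) (h : K.HomotopicRel L y y')
    (w : K.RelMulWitness L b A y C) :
    K.RelMulWitness L b A y' C :=
  master_M''' hK hL hb ((hom_iff_wit hy hy').mp h) (wit_refl hC) w

end GroupAlg

end SSetC
namespace SSetC

section GroupPart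

variable {K : SSetC} {L : Subcomplex K} {b : K.obj 0}

lemma group_part (hK : K.IsKan) (hL : L.IsKan) (hb : b ∈ L.mem 0) (m : ℕ) :
    K.IsRelSph L b (K.basept b (m + 2)) ∧
    (∀ x y : K.obj (m + 2), K.IsRelSph L b x → K.IsRelSph L b y →
      ∃ z : K.obj (m + 2), K.IsRelSph L b z ∧ K.RelMulWitness L b x y z) ∧
    (∃ mul : K.piRel L b (m + 1) → K.piRel L b (m + 1) → K.piRel L b (m + 1),
      K.RelMulDescends L b m mul ∧
      (∃ e : K.piRel L b (m + 1),
        (∀ x : K.RelSph L b (m + 1), x.1 = K.basept b (m + 2) →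
          e = K.relCls L b (m + 1) x) ∧
        (∀ a, mul e a = a) ∧ (∀ a, mul a e = a) ∧
        (∀ a, ∃ a', mul a' a = e ∧ mul a a' = e)) ∧
      (∀ a a' a'', mul (mul a a') a'' = mul a (mul a' a'')) ∧
      (1 ≤ m → ∀ a a', mul a a' = mul a' a)) := by
  classical
  have ptR : K.IsRelSph L b (K.basept b (m+2)) := basept_isRelSph K L b hb (m+1)
  refine ⟨ptR, fun x y hx hy => wit_ex hK hL hb hx hy, ?_⟩
  have heq := homotopic_equiv hK hL hb (m+1)
  choose pf pfR pfW using fun (x y : K.RelSph L b (m+1)) => wit_ex hK hL hb x.2 y.2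
  set F : K.RelSph L b (m+1) → K.RelSph L b (m+1) → K.piRel L b (m+1) :=
    fun x y => K.relCls L b (m+1) ⟨pf x y, pfR x y⟩ with hF
  have hwd : ∀ x x' y y' : K.RelSph L b (m+1),
      K.HomotopicRel L x.1 x'.1 → K.HomotopicRel L y.1 y'.1 → F x y = F x' y' := by
    intro x x' y y' hx hy
    apply Quot.sound
    have w1 : K.RelMulWitness L b x'.1 y.1 (pf x y) :=
      wit_congr_left hK hL hb x.2 x'.2 (pfR x y) hx (pfW x y)
    have w2 : K.RelMulWitness L b x'.1 y'.1 (pf x y) :=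
      wit_congr_right hK hL hb y.2 y'.2 (pfR x y) hy w1
    exact wit_uniq hK hL hb y'.2 (pfR x y) (pfR x' y') w2 (pfW x' y')
  set mul : K.piRel L b (m+1) → K.piRel L b (m+1) → K.piRel L b (m+1) :=
    Quot.lift₂ F
      (fun a b1 b2 h => hwd a a b1 b2 (heq.refl a) h)
      (fun a1 a2 bb h => hwd a1 a2 bb bb h (heq.refl bb)) with hmul
  have mulmk : ∀ x y : K.RelSph L b (m+1),
      mul (K.relCls L b (m+1) x) (K.relCls L b (m+1) y) = F x y := fun _ _ => rfl
  have desc : K.RelMulDescends L b m mul := by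
    intro x y z w
    rw [mulmk]
    exact Quot.sound (wit_uniq hK hL hb y.2 (pfR x y) z.2 (pfW x y) w)
  set eS : K.RelSph L b (m+1) := ⟨K.basept b (m+2), ptR⟩ with heS
  set e := K.relCls L b (m+1) eS with he
  have lid : ∀ a, mul e a = a := by
    intro a
    induction a using Quot.ind with
    | _ x => exact desc eS x x (wit_unit x.2)
  have rid : ∀ a, mul a e = a := by
    intro a
    induction a using Quot.ind with
    | _ x => exact desc x eS x (wit_refl x.2)
  have assoc : ∀ a a' a'', mul (mul a a') a'' = mul a (mul a' a'') := by
    intro a a' a''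
    induction a using Quot.ind with
    | _ x =>
    induction a' using Quot.ind with
    | _ y =>
    induction a'' using Quot.ind with
    | _ z =>
    have wM : K.RelMulWitness L b x.1 (pf y z)
        (pf ⟨pf x y, pfR x y⟩ z) :=
      master_M hK hL hb (pfW y z) (pfW ⟨pf x y, pfR x y⟩ z) (pfW x y)
    exact (desc x ⟨pf y z, pfR y z⟩ ⟨pf ⟨pf x y, pfR x y⟩ z,
      pfR ⟨pf x y, pfR x y⟩ z⟩ wM).symm
  have linv : ∀ a, ∃ a', mul a' a = e := by
    intro a
    induction a using Quot.ind with
    | _ x =>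
    obtain ⟨w, hwR, hww⟩ := wit_div hK hL hb x.2 ptR
    exact ⟨K.relCls L b (m+1) ⟨w, hwR⟩, desc ⟨w, hwR⟩ x eS hww⟩
  have rinv_of_linv : ∀ a a', mul a' a = e → mul a a' = e := by
    intro a a' h
    obtain ⟨c, hc⟩ := linv a'
    calc mul a a' = mul e (mul a a') := (lid _).symm
    _ = mul (mul c a') (mul a a') := by rw [hc]
    _ = mul c (mul a' (mul a a')) := assoc _ _ _
    _ = mul c (mul (mul a' a) a') := by rw [assoc]
    _ = mul c (mul e a') := by rw [h]
    _ = mul c a' := by rw [lid]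
    _ = e := hc
  have inv_uniq : ∀ a a' a'', mul a' a = e → mul a'' a = e → a'' = a' := by
    intro a a' a'' h h'
    have hr : mul a a' = e := rinv_of_linv a a' h
    calc a'' = mul a'' e := (rid _).symm
    _ = mul a'' (mul a a') := by rw [hr]
    _ = mul (mul a'' a) a' := (assoc _ _ _).symm
    _ = mul e a' := by rw [h']
    _ = a' := lid _
  refine ⟨mul, desc, ⟨e, ?_, lid, rid, ?_⟩, assoc, ?_⟩
  · intro x hx1
    rw [he]
    exact congrArg (Quot.mk _) (Subtype.ext hx1.symm)
  · intro a
    obtain ⟨a', ha'⟩ := linv a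
    exact ⟨a', ha', rinv_of_linv a a' ha'⟩
  · -- commutativity for m ≥ 1
    intro hm
    have key : ∀ w v : K.RelSph L b (m+1), ∃ N,
        mul N (K.relCls L b (m+1) v) = e ∧
        mul (K.relCls L b (m+1) w) N = mul N (K.relCls L b (m+1) w) := by
      intro w v
      obtain ⟨x1, hx1, s3⟩ := sit_ex hK hL hb w.2 v.2
      obtain ⟨z1, hz1, s1⟩ := sit_ex hK hL hb hx1 ptR
      obtain ⟨x4, hx4, s4⟩ := sit_inv hK hL hb v.2
      obtain ⟨lG, lGm, G, hG⟩ := exoG hK hL hb hm ptR v.2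
      have EX := ruleR5 hK hL hb hm ⟨lG, lGm, G, hG⟩ s1 s3 s4
      obtain ⟨δ, hδ, wδ⟩ := wit_div hK hL hb hx1 w.2
      have wR4 : K.RelMulWitness L b δ (K.basept b (m+2)) x4 :=
        ruleR4 hK hL hb hm ptR s1 EX wδ
      have wv1 : K.RelMulWitness L b w.1 v.1 x1 := bridge hK hL hb hm v.2 w.2 s3
      have wx4 : K.RelMulWitness L b x4 v.1 (K.basept b (m+2)) :=
        bridge hK hL hb hm v.2 hx4 s4
      have h1 : mul (K.relCls L b (m+1) w) (K.relCls L b (m+1) v) =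
          K.relCls L b (m+1) ⟨x1, hx1⟩ := desc w v ⟨x1, hx1⟩ wv1
      have h2 : mul (K.relCls L b (m+1) ⟨δ, hδ⟩) (K.relCls L b (m+1) ⟨x1, hx1⟩) =
          K.relCls L b (m+1) w := desc ⟨δ, hδ⟩ ⟨x1, hx1⟩ w wδ
      have h3 : mul (K.relCls L b (m+1) ⟨x4, hx4⟩) (K.relCls L b (m+1) v) = e :=
        desc ⟨x4, hx4⟩ v eS wx4
      have h4 : mul (K.relCls L b (m+1) ⟨δ, hδ⟩) e =
          K.relCls L b (m+1) ⟨x4, hx4⟩ := desc ⟨δ, hδ⟩ eS ⟨x4, hx4⟩ wR4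
      have h5 : K.relCls L b (m+1) ⟨δ, hδ⟩ = K.relCls L b (m+1) ⟨x4, hx4⟩ := by
        rw [← h4, rid]
      refine ⟨K.relCls L b (m+1) ⟨x4, hx4⟩, h3, ?_⟩
      have h6 : K.relCls L b (m+1) w =
          mul (mul (K.relCls L b (m+1) ⟨x4, hx4⟩) (K.relCls L b (m+1) w))
            (K.relCls L b (m+1) v) := by
        calc K.relCls L b (m+1) w
            = mul (K.relCls L b (m+1) ⟨δ, hδ⟩) (K.relCls L b (m+1) ⟨x1, hx1⟩) :=
              h2.symm
        _ = mul (K.relCls L b (m+1) ⟨δ, hδ⟩)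
              (mul (K.relCls L b (m+1) w) (K.relCls L b (m+1) v)) := by rw [h1]
        _ = mul (mul (K.relCls L b (m+1) ⟨δ, hδ⟩) (K.relCls L b (m+1) w))
              (K.relCls L b (m+1) v) := (assoc _ _ _).symm
        _ = mul (mul (K.relCls L b (m+1) ⟨x4, hx4⟩) (K.relCls L b (m+1) w))
              (K.relCls L b (m+1) v) := by rw [h5]
      calc mul (K.relCls L b (m+1) w) (K.relCls L b (m+1) ⟨x4, hx4⟩)
          = mul (mul (mul (K.relCls L b (m+1) ⟨x4, hx4⟩) (K.relCls L b (m+1) w))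
              (K.relCls L b (m+1) v)) (K.relCls L b (m+1) ⟨x4, hx4⟩) := by
            rw [← h6]
      _ = mul (mul (K.relCls L b (m+1) ⟨x4, hx4⟩) (K.relCls L b (m+1) w))
            (mul (K.relCls L b (m+1) v) (K.relCls L b (m+1) ⟨x4, hx4⟩)) :=
          assoc _ _ _
      _ = mul (mul (K.relCls L b (m+1) ⟨x4, hx4⟩) (K.relCls L b (m+1) w)) e := by
          rw [rinv_of_linv _ _ h3]
      _ = mul (K.relCls L b (m+1) ⟨x4, hx4⟩) (K.relCls L b (m+1) w) := rid _
    have key' : ∀ (w v : K.RelSph L b (m+1)) (N),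
        mul N (K.relCls L b (m+1) v) = e →
        mul (K.relCls L b (m+1) w) N = mul N (K.relCls L b (m+1) w) := by
      intro w v N hN
      obtain ⟨N0, hN0, hcomm⟩ := key w v
      rw [← inv_uniq (K.relCls L b (m+1) v) N N0 hN hN0]
      exact hcomm
    intro a a'
    induction a using Quot.ind with
    | _ p =>
    induction a' using Quot.ind with
    | _ q =>
    obtain ⟨δq, hδq, wδq⟩ := wit_div hK hL hb q.2 ptR
    have hLq : mul (K.relCls L b (m+1) ⟨δq, hδq⟩) (K.relCls L b (m+1) q) = e :=
      desc ⟨δq, hδq⟩ q eS wδq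
    have hRq : mul (K.relCls L b (m+1) q) (K.relCls L b (m+1) ⟨δq, hδq⟩) = e :=
      rinv_of_linv _ _ hLq
    exact key' p ⟨δq, hδq⟩ (K.relCls L b (m+1) q) hRq

end GroupPart

end SSetC
namespace SSetC

section Funct

variable {K K' : SSetC} {L : Subcomplex K} {L' : Subcomplex K'}
  {b : K.obj 0} {b' : K'.obj 0}

lemma fsph (g : SMap K K') (hgL : ∀ (n : ℕ), ∀ x ∈ L.mem n, g.app n x ∈ L'.mem n)
    (hgb : g.app 0 b = b') {m : ℕ} {x : K.obj (m+1)} (hx : K.IsRelSph L b x) :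
    K'.IsRelSph L' b' (g.app (m+1) x) := by
  constructor
  · rw [← g.comm_d m 0 (by omega) x]
    exact hgL m _ hx.1
  · rintro ⟨i, hi⟩ h1
    simp only [] at h1 ⊢
    rw [← g.comm_d m i (by omega) x, relSph_d K L b hx i h1 (by omega),
      g.basept_app, hgb]

lemma fhom (g : SMap K K') (hgL : ∀ (n : ℕ), ∀ x ∈ L.mem n, g.app n x ∈ L'.mem n)
    (hgb : g.app 0 b = b') {m : ℕ} {x y : K.obj (m+1)}
    (h : K.HomotopicRel L x y) :
    K'.HomotopicRel L' (g.app (m+1) x) (g.app (m+1) y) := by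
  obtain ⟨hd, hx0, hy0, hl, hlm, W, hW⟩ := h
  refine ⟨?_, ?_, ?_, g.app (m+1) hl, hgL (m+1) hl hlm, g.app (m+2) W, ?_⟩
  · intro i h1 h2
    rw [← g.comm_d m i h2 x, ← g.comm_d m i h2 y, hd i h1 h2]
  · rw [← g.comm_d m 0 (by omega) x]; exact hgL m _ hx0
  · rw [← g.comm_d m 0 (by omega) y]; exact hgL m _ hy0
  · funext p
    obtain ⟨i, hi⟩ := p
    show K'.d (m+1) i (g.app (m+2) W) = _
    rw [← g.comm_d (m+1) i (by omega) W, bdry_at K hW i (by omega)]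
    simp only [relTuple]
    split_ifs with h1 h2 h3
    · rfl
    · rw [g.comm_s m m le_rfl, g.comm_d m i (by omega)]
    · rfl
    · rfl

lemma fwit (g : SMap K K') (hgL : ∀ (n : ℕ), ∀ x ∈ L.mem n, g.app n x ∈ L'.mem n)
    (hgb : g.app 0 b = b') {m : ℕ} {x y z : K.obj (m+2)}
    (h : K.RelMulWitness L b x y z) :
    K'.RelMulWitness L' b' (g.app (m+2) x) (g.app (m+2) y) (g.app (m+2) z) := by
  obtain ⟨hh, hhm, W, hW⟩ := h
  refine ⟨g.app (m+2) hh, hgL (m+2) hh hhm, g.app (m+3) W, ?_⟩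
  funext p
  obtain ⟨i, hi⟩ := p
  show K'.d (m+2) i (g.app (m+3) W) = _
  rw [← g.comm_d (m+2) i (by omega) W, bdry_at K hW i (by omega)]
  simp only [relMulTuple]
  split_ifs with h1 h2 h3 h4
  · rfl
  · rw [g.basept_app, hgb]
  · rfl
  · rfl
  · rfl

end Funct

end SSetC
open SSetC in
/-- For every pointed pair `(K, L, ⋆)` of Kan complexes the
relative homotopy group `π_n(K, L, ⋆)` is a well-defined set for `n ≥ 1`
(relative homotopy is an equivalence relation on the representatives), a
well-defined group for `n = m+2 ≥ 2` (products exist, descend to the quotient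
independently of all choices, `[⋆]` is an identity, inverses exist and the
product is associative), abelian for `n ≥ 3`; moreover the construction is
functorial: maps of pointed pairs preserve representatives, relative homotopy
and products, identities and composites behave functorially. -/
theorem relative_homotopy_group_welldefined (K : SSetC) (hK : K.IsKan)
    (L : Subcomplex K) (hL : L.IsKan) (b : K.obj 0) (hb : b ∈ L.mem 0) :
    (∀ m : ℕ, Equivalence (fun x y : K.RelSph L b m => K.HomotopicRel L x.1 y.1)) ∧
    (∀ m : ℕ,
      K.IsRelSph L b (K.basept b (m + 2)) ∧
      (∀ x y : K.obj (m + 2), K.IsRelSph L b x → K.IsRelSph L b y →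
        ∃ z : K.obj (m + 2), K.IsRelSph L b z ∧ K.RelMulWitness L b x y z) ∧
      (∃ mul : K.piRel L b (m + 1) → K.piRel L b (m + 1) → K.piRel L b (m + 1),
        K.RelMulDescends L b m mul ∧
        (∃ e : K.piRel L b (m + 1),
          (∀ x : K.RelSph L b (m + 1), x.1 = K.basept b (m + 2) →
            e = K.relCls L b (m + 1) x) ∧
          (∀ a, mul e a = a) ∧ (∀ a, mul a e = a) ∧
          (∀ a, ∃ a', mul a' a = e ∧ mul a a' = e)) ∧
        (∀ a a' a'', mul (mul a a') a'' = mul a (mul a' a'')) ∧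
        (1 ≤ m → ∀ a a', mul a a' = mul a' a))) ∧
    (∀ (K' : SSetC) (L' : Subcomplex K') (b' : K'.obj 0) (g : SMap K K'),
      (∀ (n : ℕ), ∀ x ∈ L.mem n, g.app n x ∈ L'.mem n) → g.app 0 b = b' →
      ∀ m : ℕ,
        (∀ x : K.obj (m + 1), K.IsRelSph L b x → K'.IsRelSph L' b' (g.app (m + 1) x)) ∧
        (∀ x y : K.obj (m + 1), K.IsRelSph L b x → K.IsRelSph L b y →
          K.HomotopicRel L x y →
          K'.HomotopicRel L' (g.app (m + 1) x) (g.app (m + 1) y)) ∧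
        (∀ x y z : K.obj (m + 2), K.RelMulWitness L b x y z →
          K'.RelMulWitness L' b' (g.app (m + 2) x) (g.app (m + 2) y) (g.app (m + 2) z)) ∧
        (∀ x : K.obj (m + 1), (SMap.idMap K).app (m + 1) x = x) ∧
        (∀ (K'' : SSetC) (g' : SMap K' K'') (x : K.obj (m + 1)),
          (g.comp g').app (m + 1) x = g'.app (m + 1) (g.app (m + 1) x))) := by
  exact ⟨fun m => homotopic_equiv hK hL hb m,
    fun m => group_part hK hL hb m,
    fun K' L' b' g hgL hgb m => ⟨fun x hx => fsph g hgL hgb hx,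
      fun x y _ _ h => fhom g hgL hgb h,
      fun x y z h => fwit g hgL hgb h,
      fun x => rfl, fun K'' g' x => rfl⟩⟩
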